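/- arXiv:2309.13830 — 3 statements merged into one kernel-verified Lean document; each statement's English description precedes it below -/
import Mathlib

section
/- For a random variable D with CDF F, the quantity q* = inf{q ≥ 0 : F(q) ≥ ρ} with ρ = b/(b+h) minimizes the newsvendor cost C(q) = E[b(D−q)⁺ + h(q−D)⁺] over q ∈ ℝ, assuming D is nonnegative and integrable and b,h > 0. -/
open MeasureTheory Set Filter Topology ENNReal

lemma newsvendor_key1 (b h t q d : ℝ) (hb : 0 < b) (hh : 0 ≤ h) (htq : t ≤ q) :
    b * max (d - t) 0 + h * max (t - d) 0 + (q - t) * (if d ≤ t then h else -b)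
      ≤ b * max (d - q) 0 + h * max (q - d) 0 := by
  split_ifs with hdt
  · have h1 : max (d - t) 0 = 0 := max_eq_right (by linarith)
    have h2 : max (t - d) 0 = t - d := max_eq_left (by linarith)
    have h3 : max (d - q) 0 = 0 := max_eq_right (by linarith)
    have h4 : max (q - d) 0 = q - d := max_eq_left (by linarith)
    rw [h1, h2, h3, h4]
    exact le_of_eq (by ring)
  · push_neg at hdt
    have h1 : max (d - t) 0 = d - t := max_eq_left (by linarith)
    have h2 : max (t - d) 0 = 0 := max_eq_right (by linarith)
    have h5 : d - q ≤ max (d - q) 0 := le_max_left _ _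
    have h6 : (0:ℝ) ≤ max (q - d) 0 := le_max_right _ _
    rw [h1, h2]
    nlinarith [mul_le_mul_of_nonneg_left h5 hb.le, mul_nonneg hh h6]

lemma newsvendor_key2 (b h t q d : ℝ) (hb : 0 ≤ b) (hh : 0 < h) (hqt : q ≤ t) :
    b * max (d - t) 0 + h * max (t - d) 0 + (t - q) * (if d < t then -h else b)
      ≤ b * max (d - q) 0 + h * max (q - d) 0 := by
  split_ifs with hdt
  · have h1 : max (d - t) 0 = 0 := max_eq_right (by linarith)
    have h2 : max (t - d) 0 = t - d := max_eq_left (by linarith)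
    have h5 : q - d ≤ max (q - d) 0 := le_max_left _ _
    have h6 : (0:ℝ) ≤ max (d - q) 0 := le_max_right _ _
    rw [h1, h2]
    nlinarith [mul_le_mul_of_nonneg_left h5 hh.le, mul_nonneg hb h6]
  · push_neg at hdt
    have h1 : max (d - t) 0 = d - t := max_eq_left (by linarith)
    have h2 : max (t - d) 0 = 0 := max_eq_right (by linarith)
    have h3 : max (d - q) 0 = d - q := max_eq_left (by linarith)
    have h4 : max (q - d) 0 = 0 := max_eq_right (by linarith)
    rw [h1, h2, h3, h4]
    exact le_of_eq (by ring)

/-- The quantile `q* = inf{q ≥ 0 : F(q) ≥ ρ}` with `ρ = b/(b+h)` minimizes the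
newsvendor cost `C(q) = E[b(D−q)⁺ + h(q−D)⁺]`. -/
theorem newsvendor_quantile_optimal
    {Ω : Type*} [MeasurableSpace Ω] (μ : Measure Ω) [IsProbabilityMeasure μ]
    (D : Ω → ℝ) (b h : ℝ) (hb : 0 < b) (hh : 0 < h)
    (hD0 : ∀ ω, 0 ≤ D ω) (hDint : Integrable D μ) (hDmeas : Measurable D)
    (F : ℝ → ℝ) (hF : ∀ t, F t = (μ {ω | D ω ≤ t}).toReal)
    (C : ℝ → ℝ)
    (hC : ∀ q, C q = ∫ ω, (b * max (D ω - q) 0 + h * max (q - D ω) 0) ∂μ)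
    (ρ : ℝ) (hρ : ρ = b / (b + h))
    (qstar : ℝ) (hq : qstar = sInf {q : ℝ | 0 ≤ q ∧ ρ ≤ F q}) :
    ∀ q : ℝ, C qstar ≤ C q := by
  have hbh : 0 < b + h := by linarith
  have hρ0 : 0 < ρ := by rw [hρ]; positivity
  have hρ1 : ρ < 1 := by rw [hρ, div_lt_one hbh]; linarith
  have hρb : ρ * (b + h) = b := by rw [hρ]; field_simp
  set S : Set ℝ := {q : ℝ | 0 ≤ q ∧ ρ ≤ F q} with hSdef
  have hmeasle : ∀ t : ℝ, MeasurableSet {ω | D ω ≤ t} :=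
    fun t => measurableSet_le hDmeas measurable_const
  have hFmono : ∀ s t : ℝ, s ≤ t → F s ≤ F t := by
    intro s t hst
    rw [hF, hF]
    exact ENNReal.toReal_mono (measure_ne_top μ _)
      (measure_mono fun ω hω => le_trans hω hst)
  -- S is nonempty
  have hSne : S.Nonempty := by
    have hUnion : (⋃ n : ℕ, {ω | D ω ≤ (n : ℝ)}) = univ := by
      ext ω
      simp only [mem_iUnion, mem_setOf_eq, mem_univ, iff_true]
      exact exists_nat_ge (D ω)
    have hmono : Monotone (fun n : ℕ => {ω | D ω ≤ (n : ℝ)}) := by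
      intro m n hmn ω hω
      simp only [mem_setOf_eq] at *
      exact le_trans hω (by exact_mod_cast hmn)
    have h1 : Tendsto (fun n : ℕ => μ {ω | D ω ≤ (n : ℝ)}) atTop (𝓝 1) := by
      have := tendsto_measure_iUnion_atTop (μ := μ) hmono
      rw [hUnion] at this
      simpa [measure_univ, Function.comp_def] using this
    have h2 : Tendsto (fun n : ℕ => F (n : ℝ)) atTop (𝓝 1) := by
      have h3 := (ENNReal.tendsto_toReal (by simp : (1 : ℝ≥0∞) ≠ ⊤)).comp h1
      simpa [Function.comp_def, hF] using h3
    have h4 : ∀ᶠ n : ℕ in atTop, ρ < F (n : ℝ) := h2.eventually (eventually_gt_nhds hρ1)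
    obtain ⟨n, hn⟩ := h4.exists
    exact ⟨(n : ℝ), ⟨n.cast_nonneg, hn.le⟩⟩
  have hSbdd : BddBelow S := ⟨0, fun x hx => hx.1⟩
  have hq0 : 0 ≤ qstar := hq ▸ le_csInf hSne fun x hx => hx.1
  -- Fact A : ρ ≤ F qstar
  have hFA : ρ ≤ F qstar := by
    have hInter : (⋂ n : ℕ, {ω | D ω ≤ qstar + 1 / (n + 1)}) = {ω | D ω ≤ qstar} := by
      ext ω
      simp only [mem_iInter, mem_setOf_eq]
      constructor
      · intro hall
        by_contra hcon
        push_neg at hcon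
        obtain ⟨n, hn⟩ := exists_nat_one_div_lt (sub_pos.mpr hcon)
        exact absurd (hall n) (by push_cast; push_cast at hn; linarith)
      · intro hle n
        have : (0:ℝ) < 1 / (n + 1) := by positivity
        linarith
    have hAnti : Antitone (fun n : ℕ => {ω | D ω ≤ qstar + 1 / ((n : ℝ) + 1)}) := by
      intro m n hmn ω hω
      simp only [mem_setOf_eq] at *
      have hmn' : (m:ℝ) ≤ (n:ℝ) := Nat.cast_le.mpr hmn
      have : (1:ℝ) / ((n:ℝ) + 1) ≤ 1 / ((m:ℝ) + 1) :=
        one_div_le_one_div_of_le (by positivity) (by linarith)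
      linarith
    have h1 : Tendsto (fun n : ℕ => μ {ω | D ω ≤ qstar + 1 / ((n : ℝ) + 1)}) atTop
        (𝓝 (μ {ω | D ω ≤ qstar})) := by
      have := tendsto_measure_iInter_atTop (μ := μ)
        (fun n => (hmeasle _).nullMeasurableSet) hAnti ⟨0, measure_ne_top μ _⟩
      rwa [hInter] at this
    have h2 : Tendsto (fun n : ℕ => F (qstar + 1 / ((n : ℝ) + 1))) atTop (𝓝 (F qstar)) := by
      have h3 := (ENNReal.tendsto_toReal (measure_ne_top μ _)).comp h1
      simpa [Function.comp_def, hF] using h3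
    refine ge_of_tendsto' h2 fun n => ?_
    have hlt : sInf S < qstar + 1 / ((n : ℝ) + 1) := by
      have : (0:ℝ) < 1 / ((n:ℝ) + 1) := by positivity
      rw [← hq]
      linarith
    obtain ⟨s, hsS, hs⟩ := exists_lt_of_csInf_lt hSne hlt
    exact le_trans hsS.2 (hFmono _ _ hs.le)
  -- Fact B : μ {D < qstar} ≤ ρ
  have hFB : (μ {ω | D ω < qstar}).toReal ≤ ρ := by
    have hFlt : ∀ t : ℝ, t < qstar → F t ≤ ρ := by
      intro t ht
      rcases lt_or_ge t 0 with h0 | h0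
      · have hempty : {ω | D ω ≤ t} = ∅ := by
          ext ω
          simp only [mem_setOf_eq, mem_empty_iff_false, iff_false, not_le]
          exact lt_of_lt_of_le h0 (hD0 ω)
        rw [hF, hempty]
        simp [hρ0.le]
      · by_contra hcon
        push_neg at hcon
        have : t ∈ S := ⟨h0, hcon.le⟩
        have := csInf_le hSbdd this
        rw [← hq] at this
        linarith
    have hUnion2 : (⋃ n : ℕ, {ω | D ω ≤ qstar - 1 / ((n : ℝ) + 1)}) = {ω | D ω < qstar} := by
      ext ω
      simp only [mem_iUnion, mem_setOf_eq]
      constructor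
      · rintro ⟨n, hn⟩
        have : (0:ℝ) < 1 / ((n:ℝ) + 1) := by positivity
        linarith
      · intro hlt
        obtain ⟨n, hn⟩ := exists_nat_one_div_lt (sub_pos.mpr hlt)
        exact ⟨n, by push_cast at hn ⊢; linarith⟩
    have hmono2 : Monotone (fun n : ℕ => {ω | D ω ≤ qstar - 1 / ((n : ℝ) + 1)}) := by
      intro m n hmn ω hω
      simp only [mem_setOf_eq] at *
      have hmn' : (m:ℝ) ≤ (n:ℝ) := Nat.cast_le.mpr hmn
      have : (1:ℝ) / ((n:ℝ) + 1) ≤ 1 / ((m:ℝ) + 1) :=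
        one_div_le_one_div_of_le (by positivity) (by linarith)
      linarith
    have h1 : Tendsto (fun n : ℕ => μ {ω | D ω ≤ qstar - 1 / ((n : ℝ) + 1)}) atTop
        (𝓝 (μ {ω | D ω < qstar})) := by
      have := tendsto_measure_iUnion_atTop (μ := μ) hmono2
      rwa [hUnion2] at this
    have h2 : Tendsto (fun n : ℕ => F (qstar - 1 / ((n : ℝ) + 1))) atTop
        (𝓝 ((μ {ω | D ω < qstar}).toReal)) := by
      have h3 := (ENNReal.tendsto_toReal (measure_ne_top μ _)).comp h1
      simpa [Function.comp_def, hF] using h3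
    refine le_of_tendsto' h2 fun n => ?_
    apply hFlt
    have : (0:ℝ) < 1 / ((n:ℝ) + 1) := by positivity
    linarith
  -- integrability of the cost integrand
  have hint : ∀ q : ℝ,
      Integrable (fun ω => b * max (D ω - q) 0 + h * max (q - D ω) 0) μ := by
    intro q
    have h1 : Integrable (fun ω => max (D ω - q) 0) μ :=
      (hDint.sub (integrable_const q)).pos_part
    have h2 : Integrable (fun ω => max (q - D ω) 0) μ :=
      ((integrable_const q).sub hDint).pos_part
    exact (h1.const_mul b).add (h2.const_mul h)
  intro q
  rcases le_total qstar q with hcase | hcase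
  · -- q ≥ qstar
    set A : Set Ω := {ω | D ω ≤ qstar} with hAdef
    have hA : MeasurableSet A := hmeasle qstar
    set g : Ω → ℝ := fun ω => A.indicator (fun _ => h + b) ω - b with hgdef
    have hgint : Integrable g μ :=
      ((integrable_const (h + b)).indicator hA).sub (integrable_const b)
    have hgeq : ∀ ω, g ω = if D ω ≤ qstar then h else -b := by
      intro ω
      by_cases hω : D ω ≤ qstar
      · simp [hgdef, indicator_of_mem (show ω ∈ A from hω), hω]
      · simp [hgdef, indicator_of_notMem (show ω ∉ A from hω), hω]
    have hpt : ∀ ω,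
        (b * max (D ω - qstar) 0 + h * max (qstar - D ω) 0) + (q - qstar) * g ω
          ≤ b * max (D ω - q) 0 + h * max (q - D ω) 0 := by
      intro ω
      rw [hgeq]
      exact newsvendor_key1 b h qstar q (D ω) hb hh.le hcase
    have hLint : Integrable
        (fun ω => (b * max (D ω - qstar) 0 + h * max (qstar - D ω) 0) + (q - qstar) * g ω) μ :=
      (hint qstar).add (hgint.const_mul _)
    have hmono := integral_mono hLint (hint q) hpt
    rw [integral_add (hint qstar) (hgint.const_mul _), integral_const_mul] at hmono
    have hgI : ∫ ω, g ω ∂μ = (μ A).toReal * (h + b) - b := by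
      rw [hgdef]
      rw [integral_sub ((integrable_const (h + b)).indicator hA) (integrable_const b),
        integral_indicator_const _ hA, integral_const]
      simp [smul_eq_mul, Measure.real]
    have hgpos : 0 ≤ ∫ ω, g ω ∂μ := by
      rw [hgI]
      have hFq : ρ ≤ (μ A).toReal := by
        rw [hAdef, ← hF qstar]
        exact hFA
      have h1 : ρ * (h + b) ≤ (μ A).toReal * (h + b) :=
        mul_le_mul_of_nonneg_right hFq (by linarith)
      have h2 : ρ * (h + b) = b := by rw [add_comm h b]; exact hρb
      linarith
    rw [hC, hC]
    have : 0 ≤ (q - qstar) * ∫ ω, g ω ∂μ :=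
      mul_nonneg (by linarith) hgpos
    linarith
  · -- q ≤ qstar
    set A : Set Ω := {ω | D ω < qstar} with hAdef
    have hA : MeasurableSet A := measurableSet_lt hDmeas measurable_const
    set g : Ω → ℝ := fun ω => b - A.indicator (fun _ => b + h) ω with hgdef
    have hgint : Integrable g μ :=
      (integrable_const b).sub ((integrable_const (b + h)).indicator hA)
    have hgeq : ∀ ω, g ω = if D ω < qstar then -h else b := by
      intro ω
      by_cases hω : D ω < qstar
      · simp [hgdef, indicator_of_mem (show ω ∈ A from hω), hω]
      · simp [hgdef, indicator_of_notMem (show ω ∉ A from hω), hω]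
    have hpt : ∀ ω,
        (b * max (D ω - qstar) 0 + h * max (qstar - D ω) 0) + (qstar - q) * g ω
          ≤ b * max (D ω - q) 0 + h * max (q - D ω) 0 := by
      intro ω
      rw [hgeq]
      exact newsvendor_key2 b h qstar q (D ω) hb.le hh hcase
    have hLint : Integrable
        (fun ω => (b * max (D ω - qstar) 0 + h * max (qstar - D ω) 0) + (qstar - q) * g ω) μ :=
      (hint qstar).add (hgint.const_mul _)
    have hmono := integral_mono hLint (hint q) hpt
    rw [integral_add (hint qstar) (hgint.const_mul _), integral_const_mul] at hmono
    have hgI : ∫ ω, g ω ∂μ = b - (μ A).toReal * (b + h) := by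
      rw [hgdef]
      rw [integral_sub (integrable_const b) ((integrable_const (b + h)).indicator hA),
        integral_indicator_const _ hA, integral_const]
      simp [smul_eq_mul, Measure.real]
    have hgpos : 0 ≤ ∫ ω, g ω ∂μ := by
      rw [hgI]
      have h1 : (μ A).toReal * (b + h) ≤ ρ * (b + h) :=
        mul_le_mul_of_nonneg_right hFB hbh.le
      have h2 : ρ * (b + h) = b := hρb
      linarith
    rw [hC, hC]
    have : 0 ≤ (qstar - q) * ∫ ω, g ω ∂μ :=
      mul_nonneg (by linarith) hgpos
    linarith
end

section
/- Let X be uniformly distributed on [−1,1]ᵖ and f_ρ(x) = A + xᵀBx + Cᵀx with B symmetric. Then for every constant d ∈ ℝ, E[(f_ρ(X) − d)²] ≥ (2/9)·tr(B²) − (2/15)·Σᵢ Bᵢᵢ² + (1/3)·CᵀC, and this lower bound is strictly positive if B ≠ 0 or C ≠ 0. -/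
open MeasureTheory ProbabilityTheory
open scoped ENNReal


noncomputable def QDnu : Measure ℝ := (2 : ℝ≥0∞)⁻¹ • (volume.restrict (Set.Icc (-1 : ℝ) 1))

instance : IsProbabilityMeasure QDnu := by
  constructor
  rw [QDnu, Measure.smul_apply, Measure.restrict_apply MeasurableSet.univ]
  rw [Set.univ_inter, Real.volume_Icc]
  norm_num
  exact ENNReal.inv_mul_cancel (by norm_num) (by norm_num)

lemma QDnu_moment (k : ℕ) : ∫ t, t ^ k ∂QDnu = (1 - (-1 : ℝ)^(k+1)) / (2*(k+1)) := by
  rw [QDnu, integral_smul_measure]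
  rw [MeasureTheory.integral_Icc_eq_integral_Ioc,
    ← intervalIntegral.integral_of_le (by norm_num : (-1:ℝ) ≤ 1), integral_pow]
  have hk : (2:ℝ)*(k+1) ≠ 0 := by positivity
  have hk1 : (k:ℝ)+1 ≠ 0 := by positivity
  simp
  field_simp

lemma QDnu_int (k : ℕ) : Integrable (fun t : ℝ => t ^ k) QDnu := by
  rw [QDnu]
  exact Integrable.smul_measure (show Integrable (fun t : ℝ => t ^ k) (volume.restrict (Set.Icc (-1:ℝ) 1)) from (continuous_pow k).integrableOn_Icc) (by norm_num)

lemma QDM0 : ∫ t, (1:ℝ) ∂QDnu = 1 := by simp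
lemma QDM1 : ∫ t, t ∂QDnu = 0 := by
  have := QDnu_moment 1; norm_num at this; simpa using this
lemma QDM2 : ∫ t, t ^ 2 ∂QDnu = 1/3 := by rw [QDnu_moment]; norm_num
lemma QDM3 : ∫ t, t ^ 3 ∂QDnu = 0 := by rw [QDnu_moment]; norm_num
lemma QDM4 : ∫ t, t ^ 4 ∂QDnu = 1/5 := by rw [QDnu_moment]; norm_num

lemma QDnu_compl : QDnu {t : ℝ | ¬ |t| ≤ 1} = 0 := by
  rw [QDnu, Measure.smul_apply, Measure.restrict_apply' measurableSet_Icc]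
  have h : {t : ℝ | ¬ |t| ≤ 1} ∩ Set.Icc (-1) 1 = ∅ := by
    ext t
    simp only [Set.mem_inter_iff, Set.mem_setOf_eq, Set.mem_Icc, Set.mem_empty_iff_false,
      iff_false]
    rintro ⟨h, h1, h2⟩
    exact h (abs_le.mpr ⟨h1, h2⟩)
  rw [h]
  simp

noncomputable def QDpi (p : ℕ) : Measure (Fin p → ℝ) := Measure.pi fun _ => QDnu

instance (p : ℕ) : IsProbabilityMeasure (QDpi p) := by unfold QDpi; infer_instance

lemma QD_box (p : ℕ) : ∀ᵐ x ∂(QDpi p), ∀ m, |x m| ≤ 1 := by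
  rw [ae_all_iff]
  intro m
  rw [ae_iff]
  have h : {x : Fin p → ℝ | ¬ |x m| ≤ 1}
      = Set.pi Set.univ (fun n => if n = m then {t : ℝ | ¬ |t| ≤ 1} else Set.univ) := by
    ext x
    simp only [Set.mem_setOf_eq, Set.mem_univ_pi]
    constructor
    · intro h n
      by_cases hn : n = m
      · subst hn; simpa using h
      · simp [hn]
    · intro h
      have := h m
      simpa using this
  rw [h, QDpi, Measure.pi_pi]
  apply Finset.prod_eq_zero (Finset.mem_univ m)
  simpa using QDnu_compl

lemma QD_integral_pi_prod {E : Type*} {mE : MeasurableSpace E} (ν : Measure E) [SigmaFinite ν]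
    {ι : Type*} [Fintype ι] (f : ι → E → ℝ) :
    ∫ x : ι → E, ∏ i, f i (x i) ∂(Measure.pi fun _ => ν) = ∏ i, ∫ t, f i t ∂ν := by
  letI : MeasureSpace E := ⟨ν⟩
  exact integral_fintype_prod_eq_prod f

lemma QD_int_pow {p : ℕ} (e : Fin p → ℕ) :
    ∫ x, ∏ m, x m ^ e m ∂(QDpi p) = ∏ m, ∫ t, t ^ e m ∂QDnu :=
  QD_integral_pi_prod QDnu fun m t => t ^ e m

lemma QD_pow_ite {p : ℕ} (x : Fin p → ℝ) (i : Fin p) :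
    ∏ m, x m ^ (if i = m then 1 else 0) = x i := by
  simp [pow_ite, Finset.prod_ite_eq]

lemma QDEI1 {p : ℕ} (i : Fin p) : ∫ x, x i ∂(QDpi p) = 0 := by
  rw [show (fun x : Fin p → ℝ => x i)
      = fun x => ∏ m, x m ^ (if i = m then 1 else 0) from
    funext fun x => (QD_pow_ite x i).symm, QD_int_pow]
  exact Finset.prod_eq_zero (Finset.mem_univ i) (by simpa using QDM1)

lemma QDEI2 {p : ℕ} (i j : Fin p) :
    ∫ x, x i * x j ∂(QDpi p) = if i = j then (1/3 : ℝ) else 0 := by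
  rw [show (fun x : Fin p → ℝ => x i * x j)
      = fun x => ∏ m, x m ^ ((if i = m then 1 else 0) + (if j = m then 1 else 0)) from
    funext fun x => by
      simp only [pow_add, Finset.prod_mul_distrib, QD_pow_ite], QD_int_pow]
  by_cases h : i = j
  · subst h
    rw [if_pos rfl]
    have hm : ∀ m : Fin p,
        (∫ t, t ^ ((if i = m then 1 else 0) + (if i = m then 1 else 0)) ∂QDnu)
          = if i = m then (1/3 : ℝ) else 1 := by
      intro m
      by_cases hm : i = m
      · rw [if_pos hm, if_pos hm]
        norm_num
        exact QDM2
      · rw [if_neg hm, if_neg hm]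
        simpa using QDM0
    rw [Finset.prod_congr rfl fun m _ => hm m]
    simp [Finset.prod_ite_eq]
  · rw [if_neg h]
    refine Finset.prod_eq_zero (Finset.mem_univ i) ?_
    have hj : ¬ j = i := fun hh => h hh.symm
    simpa [hj] using QDM1

lemma QDEI3 {p : ℕ} (i j k : Fin p) : ∫ x, x i * x j * x k ∂(QDpi p) = 0 := by
  rw [show (fun x : Fin p → ℝ => x i * x j * x k)
      = fun x => ∏ m, x m ^
        ((if i = m then 1 else 0) + (if j = m then 1 else 0) + (if k = m then 1 else 0)) from
    funext fun x => by
      simp only [pow_add, Finset.prod_mul_distrib, QD_pow_ite], QD_int_pow]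
  by_cases hij : i = j
  · subst hij
    by_cases hik : i = k
    · subst hik
      refine Finset.prod_eq_zero (Finset.mem_univ i) ?_
      norm_num
      exact QDM3
    · refine Finset.prod_eq_zero (Finset.mem_univ k) ?_
      norm_num [hik]
      exact QDM1
  · by_cases hik : i = k
    · subst hik
      refine Finset.prod_eq_zero (Finset.mem_univ j) ?_
      have h1 : ¬ i = j := hij
      norm_num [h1]
      exact QDM1
    · by_cases hjk : j = k
      · subst hjk
        refine Finset.prod_eq_zero (Finset.mem_univ i) ?_
        have h1 : ¬ j = i := fun h => hij h.symm
        norm_num [h1]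
        exact QDM1
      · refine Finset.prod_eq_zero (Finset.mem_univ i) ?_
        have h1 : ¬ j = i := fun h => hij h.symm
        have h2 : ¬ k = i := fun h => hik h.symm
        norm_num [h1, h2]
        exact QDM1

lemma QD_prod_two {p : ℕ} {i k : Fin p} (h : ¬ i = k) (f : Fin p → ℝ)
    (hf : ∀ m, f m = (if i = m then (1/3 : ℝ) else 1) * (if k = m then (1/3 : ℝ) else 1)) :
    ∏ m, f m = 1/9 := by
  rw [Finset.prod_congr rfl fun m _ => hf m, Finset.prod_mul_distrib]
  simp [Finset.prod_ite_eq]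
  norm_num

lemma QDEI4 {p : ℕ} (i j k l : Fin p) :
    ∫ x, x i * x j * x k * x l ∂(QDpi p)
      = (if i = j then 1 else 0) * (if k = l then 1 else 0) / 9
      + (if i = k then 1 else 0) * (if j = l then 1 else 0) / 9
      + (if i = l then 1 else 0) * (if j = k then 1 else 0) / 9
      - 2/15 * ((if i = j then 1 else 0) * (if i = k then 1 else 0)
          * (if i = l then 1 else 0)) := by
  rw [show (fun x : Fin p → ℝ => x i * x j * x k * x l)
      = fun x => ∏ m, x m ^
        ((if i = m then 1 else 0) + (if j = m then 1 else 0) + (if k = m then 1 else 0)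
          + (if l = m then 1 else 0)) from
    funext fun x => by
      simp only [pow_add, Finset.prod_mul_distrib, QD_pow_ite], QD_int_pow]
  by_cases hij : i = j
  · subst hij
    by_cases hik : i = k
    · subst hik
      by_cases hil : i = l
      · subst hil
        simp only [if_pos rfl]
        have hm : ∀ m : Fin p,
            (∫ t, t ^ ((if i = m then 1 else 0) + (if i = m then 1 else 0)
              + (if i = m then 1 else 0) + (if i = m then 1 else 0)) ∂QDnu)
              = if i = m then (1/5 : ℝ) else 1 := by
          intro m
          by_cases hm : i = m
          · rw [if_pos hm, if_pos hm]
            norm_num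
            exact QDM4
          · rw [if_neg hm, if_neg hm]
            simpa using QDM0
        rw [Finset.prod_congr rfl fun m _ => hm m]
        simp [Finset.prod_ite_eq]
        norm_num
      · -- i = j = k ≠ l : zero
        have h1 : ¬ l = i := fun h => hil h.symm
        rw [Finset.prod_eq_zero (Finset.mem_univ l) (by norm_num [hil]; exact QDM1)]
        norm_num [hil]
    · by_cases hkl : k = l
      · subst hkl
        -- pairs (i,i),(k,k), i ≠ k
        simp only [if_pos rfl, if_neg hik]
        rw [QD_prod_two hik _ (fun m => ?_)]
        · norm_num
        · by_cases h1 : i = m <;> by_cases h2 : k = m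
          · exact absurd (h1.trans h2.symm) hik
          · rw [if_pos h1, if_neg h2, if_pos h1, if_neg h2]
            norm_num
            exact QDM2
          · rw [if_neg h1, if_pos h2, if_neg h1, if_pos h2]
            norm_num
            exact QDM2
          · rw [if_neg h1, if_neg h2, if_neg h1, if_neg h2]
            simpa using QDM0
      · by_cases hil : i = l
        · subst hil
          -- (i,i,k,i), k ≠ i
          rw [Finset.prod_eq_zero (Finset.mem_univ k) (by norm_num [hik, hkl]; exact QDM1)]
          norm_num [hik, hkl]
        · -- (i,i,k,l), k ∉ {i,l}, l ≠ i
          have h2 : ¬ l = k := fun h => hkl h.symm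
          rw [Finset.prod_eq_zero (Finset.mem_univ k) (by norm_num [hik, h2]; exact QDM1)]
          norm_num [hik, hil, hkl]
  · by_cases hik : i = k
    · subst hik
      by_cases hjl : j = l
      · subst hjl
        -- (i,j,i,j), i ≠ j
        simp only [if_pos rfl, if_neg hij]
        rw [QD_prod_two hij _ (fun m => ?_)]
        · norm_num
        · by_cases h1 : i = m <;> by_cases h2 : j = m
          · exact absurd (h1.trans h2.symm) hij
          · rw [if_pos h1, if_neg h2, if_pos h1, if_neg h2]
            norm_num
            exact QDM2
          · rw [if_neg h1, if_pos h2, if_neg h1, if_pos h2]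
            norm_num
            exact QDM2
          · rw [if_neg h1, if_neg h2, if_neg h1, if_neg h2]
            simpa using QDM0
      · by_cases hil : i = l
        · subst hil
          -- (i,j,i,i), j ≠ i
          have h1 : ¬ i = j := hij
          rw [Finset.prod_eq_zero (Finset.mem_univ j) (by norm_num [h1]; exact QDM1)]
          norm_num [h1, hjl]
        · -- (i,j,i,l), j ≠ i, l ∉ {i,j}
          have h1 : ¬ i = j := hij
          have h2 : ¬ l = j := fun h => hjl h.symm
          rw [Finset.prod_eq_zero (Finset.mem_univ j) (by norm_num [h1, h2]; exact QDM1)]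
          norm_num [h1, hjl, hil]
    · by_cases hil : i = l
      · subst hil
        by_cases hjk : j = k
        · subst hjk
          -- (i,j,j,i), i ≠ j
          simp only [if_pos rfl, if_neg hij]
          rw [QD_prod_two hij _ (fun m => ?_)]
          · norm_num
          · by_cases h1 : i = m <;> by_cases h2 : j = m
            · exact absurd (h1.trans h2.symm) hij
            · rw [if_pos h1, if_neg h2, if_pos h1, if_neg h2]
              norm_num
              exact QDM2
            · rw [if_neg h1, if_pos h2, if_neg h1, if_pos h2]
              norm_num
              exact QDM2
            · rw [if_neg h1, if_neg h2, if_neg h1, if_neg h2]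
              simpa using QDM0
        · -- (i,j,k,i)
          have h1 : ¬ i = j := hij
          have h2 : ¬ k = j := fun h => hjk h.symm
          rw [Finset.prod_eq_zero (Finset.mem_univ j) (by norm_num [h1, h2]; exact QDM1)]
          norm_num [h1, hik, hjk]
      · -- i alone
        have h1 : ¬ j = i := fun h => hij h.symm
        have h2 : ¬ k = i := fun h => hik h.symm
        have h3 : ¬ l = i := fun h => hil h.symm
        rw [Finset.prod_eq_zero (Finset.mem_univ i) (by norm_num [h1, h2, h3]; exact QDM1)]
        norm_num [hij, hik, hil]


lemma QD_meas1 {p : ℕ} (i : Fin p) : Measurable (fun x : Fin p → ℝ => x i) :=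
  measurable_pi_apply i

lemma QD_int1 {p : ℕ} (i : Fin p) : Integrable (fun x : Fin p → ℝ => x i) (QDpi p) := by
  refine Integrable.mono' (integrable_const (1:ℝ))
    (measurable_pi_apply i).aestronglyMeasurable ?_
  filter_upwards [QD_box p] with x hx
  simpa [Real.norm_eq_abs] using hx i

lemma QD_int2 {p : ℕ} (i j : Fin p) :
    Integrable (fun x : Fin p → ℝ => x i * x j) (QDpi p) := by
  refine Integrable.mono' (integrable_const (1:ℝ))
    (((measurable_pi_apply i).mul (measurable_pi_apply j)).aestronglyMeasurable) ?_
  filter_upwards [QD_box p] with x hx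
  rw [Real.norm_eq_abs, abs_mul]
  exact mul_le_one₀ (hx i) (abs_nonneg _) (hx j)

lemma QD_int3 {p : ℕ} (i j k : Fin p) :
    Integrable (fun x : Fin p → ℝ => x i * x j * x k) (QDpi p) := by
  refine Integrable.mono' (integrable_const (1:ℝ))
    ((((measurable_pi_apply i).mul (measurable_pi_apply j)).mul
      (measurable_pi_apply k)).aestronglyMeasurable) ?_
  filter_upwards [QD_box p] with x hx
  rw [Real.norm_eq_abs, abs_mul, abs_mul]
  exact mul_le_one₀ (mul_le_one₀ (hx i) (abs_nonneg _) (hx j)) (abs_nonneg _) (hx k)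

lemma QD_int4 {p : ℕ} (i j k l : Fin p) :
    Integrable (fun x : Fin p → ℝ => x i * x j * x k * x l) (QDpi p) := by
  refine Integrable.mono' (integrable_const (1:ℝ))
    (((((measurable_pi_apply i).mul (measurable_pi_apply j)).mul
      (measurable_pi_apply k)).mul (measurable_pi_apply l)).aestronglyMeasurable) ?_
  filter_upwards [QD_box p] with x hx
  rw [Real.norm_eq_abs, abs_mul, abs_mul, abs_mul]
  exact mul_le_one₀ (mul_le_one₀ (mul_le_one₀ (hx i) (abs_nonneg _) (hx j))
    (abs_nonneg _) (hx k)) (abs_nonneg _) (hx l)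

variable {p : ℕ} (B : Matrix (Fin p) (Fin p) ℝ) (C : Fin p → ℝ)

-- integrability of the building blocks
lemma QDintQ : Integrable (fun x : Fin p → ℝ => ∑ i, ∑ j, x i * B i j * x j) (QDpi p) := by
  refine integrable_finset_sum _ fun i _ => integrable_finset_sum _ fun j _ => ?_
  have : (fun x : Fin p → ℝ => x i * B i j * x j) = fun x => B i j * (x i * x j) := by
    funext x; ring
  rw [this]
  exact (QD_int2 i j).const_mul _

lemma QDintL : Integrable (fun x : Fin p → ℝ => ∑ i, C i * x i) (QDpi p) :=
  integrable_finset_sum _ fun i _ => (QD_int1 i).const_mul _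

lemma QDexpQQ (x : Fin p → ℝ) :
    (∑ i, ∑ j, x i * B i j * x j) * (∑ k, ∑ l, x k * B k l * x l)
      = ∑ i, ∑ k, ∑ j, ∑ l, (B i j * B k l) * (x i * x j * x k * x l) := by
  rw [Finset.sum_mul_sum]
  refine Finset.sum_congr rfl fun i _ => Finset.sum_congr rfl fun k _ => ?_
  rw [Finset.sum_mul_sum]
  exact Finset.sum_congr rfl fun j _ => Finset.sum_congr rfl fun l _ => by ring

lemma QDintQQ : Integrable
    (fun x : Fin p → ℝ =>
      (∑ i, ∑ j, x i * B i j * x j) * (∑ k, ∑ l, x k * B k l * x l)) (QDpi p) := by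
  simp_rw [QDexpQQ]
  refine integrable_finset_sum _ fun i _ => integrable_finset_sum _ fun k _ =>
    integrable_finset_sum _ fun j _ => integrable_finset_sum _ fun l _ =>
      (QD_int4 i j k l).const_mul _

lemma QDexpQL (x : Fin p → ℝ) :
    (∑ i, ∑ j, x i * B i j * x j) * (∑ k, C k * x k)
      = ∑ i, ∑ k, ∑ j, (B i j * C k) * (x i * x j * x k) := by
  rw [Finset.sum_mul_sum]
  refine Finset.sum_congr rfl fun i _ => Finset.sum_congr rfl fun k _ => ?_
  rw [Finset.sum_mul]
  exact Finset.sum_congr rfl fun j _ => by ring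

lemma QDintQL : Integrable
    (fun x : Fin p → ℝ =>
      (∑ i, ∑ j, x i * B i j * x j) * (∑ k, C k * x k)) (QDpi p) := by
  simp_rw [QDexpQL]
  exact integrable_finset_sum _ fun i _ => integrable_finset_sum _ fun k _ =>
    integrable_finset_sum _ fun j _ => (QD_int3 i j k).const_mul _

lemma QDexpLL (x : Fin p → ℝ) :
    (∑ i, C i * x i) * (∑ j, C j * x j)
      = ∑ i, ∑ j, (C i * C j) * (x i * x j) := by
  rw [Finset.sum_mul_sum]
  exact Finset.sum_congr rfl fun i _ => Finset.sum_congr rfl fun j _ => by ring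

lemma QDintLL : Integrable
    (fun x : Fin p → ℝ => (∑ i, C i * x i) * (∑ j, C j * x j)) (QDpi p) := by
  simp_rw [QDexpLL]
  exact integrable_finset_sum _ fun i _ => integrable_finset_sum _ fun j _ =>
    (QD_int2 i j).const_mul _

-- values
lemma QDhQ : ∫ x, (∑ i, ∑ j, x i * B i j * x j) ∂(QDpi p) = (∑ i, B i i) / 3 := by
  rw [integral_finset_sum _ fun i _ => integrable_finset_sum _ fun j _ => by
    have : (fun x : Fin p → ℝ => x i * B i j * x j) = fun x => B i j * (x i * x j) := by
      funext x; ring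
    rw [this]; exact (QD_int2 i j).const_mul _]
  have : ∀ i : Fin p, ∫ x, (∑ j, x i * B i j * x j) ∂(QDpi p) = B i i * (1/3) := by
    intro i
    rw [integral_finset_sum _ fun j _ => by
      have : (fun x : Fin p → ℝ => x i * B i j * x j) = fun x => B i j * (x i * x j) := by
        funext x; ring
      rw [this]; exact (QD_int2 i j).const_mul _]
    have h2 : ∀ j : Fin p, ∫ x, x i * B i j * x j ∂(QDpi p)
        = B i j * (if i = j then (1/3:ℝ) else 0) := by
      intro j
      have : (fun x : Fin p → ℝ => x i * B i j * x j) = fun x => B i j * (x i * x j) := by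
        funext x; ring
      rw [this, integral_const_mul, QDEI2]
    simp_rw [h2]
    simp [Finset.sum_ite_eq, mul_ite]
  simp_rw [this]
  rw [← Finset.sum_mul]
  ring

lemma QDhL : ∫ x, (∑ i, C i * x i) ∂(QDpi p) = 0 := by
  rw [integral_finset_sum _ fun i _ => (QD_int1 i).const_mul _]
  simp_rw [integral_const_mul, QDEI1]
  simp

lemma QDhLL : ∫ x, (∑ i, C i * x i) * (∑ j, C j * x j) ∂(QDpi p)
    = (∑ i, C i * C i) / 3 := by
  simp_rw [QDexpLL]
  rw [integral_finset_sum _ fun i _ => integrable_finset_sum _ fun j _ =>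
    (QD_int2 i j).const_mul _]
  have : ∀ i : Fin p, ∫ x, (∑ j, (C i * C j) * (x i * x j)) ∂(QDpi p)
      = C i * C i * (1/3) := by
    intro i
    rw [integral_finset_sum _ fun j _ => (QD_int2 i j).const_mul _]
    simp_rw [integral_const_mul, QDEI2]
    simp [Finset.sum_ite_eq, mul_ite]
  simp_rw [this]
  rw [← Finset.sum_mul]
  ring

lemma QDhQL : ∫ x, (∑ i, ∑ j, x i * B i j * x j) * (∑ k, C k * x k) ∂(QDpi p) = 0 := by
  simp_rw [QDexpQL]
  rw [integral_finset_sum _ fun i _ => integrable_finset_sum _ fun k _ =>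
    integrable_finset_sum _ fun j _ => (QD_int3 i j k).const_mul _]
  refine Finset.sum_eq_zero fun i _ => ?_
  rw [integral_finset_sum _ fun k _ =>
    integrable_finset_sum _ fun j _ => (QD_int3 i j k).const_mul _]
  refine Finset.sum_eq_zero fun k _ => ?_
  rw [integral_finset_sum _ fun j _ => (QD_int3 i j k).const_mul _]
  refine Finset.sum_eq_zero fun j _ => ?_
  rw [integral_const_mul, QDEI3, mul_zero]


lemma QDaux1 : ∑ i, ∑ k, ∑ j, ∑ l, (B i j * B k l) *
      ((if i = j then (1:ℝ) else 0) * (if k = l then 1 else 0) / 9)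
    = (∑ i, B i i) * (∑ i, B i i) / 9 := by
  simp only [div_eq_mul_inv, ite_mul, mul_ite, one_mul, mul_one, zero_mul, mul_zero,
    Finset.sum_ite_irrel, Finset.sum_ite_eq, Finset.sum_ite_eq', Finset.mem_univ, if_true,
    Finset.sum_const_zero]
  rw [Finset.sum_mul_sum, Finset.sum_mul]
  refine Finset.sum_congr rfl fun i _ => ?_
  rw [Finset.sum_mul]

lemma QDaux2 : ∑ i, ∑ k, ∑ j, ∑ l, (B i j * B k l) *
      ((if i = k then (1:ℝ) else 0) * (if j = l then 1 else 0) / 9)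
    = (∑ i, ∑ j, B i j * B i j) / 9 := by
  simp only [div_eq_mul_inv, ite_mul, mul_ite, one_mul, mul_one, zero_mul, mul_zero,
    Finset.sum_ite_irrel, Finset.sum_ite_eq, Finset.sum_ite_eq', Finset.mem_univ, if_true,
    Finset.sum_const_zero]
  rw [Finset.sum_mul]
  refine Finset.sum_congr rfl fun i _ => ?_
  rw [Finset.sum_mul]

lemma QDaux3 : ∑ i, ∑ k, ∑ j, ∑ l, (B i j * B k l) *
      ((if i = l then (1:ℝ) else 0) * (if j = k then 1 else 0) / 9)
    = (∑ i, ∑ j, B i j * B j i) / 9 := by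
  simp only [div_eq_mul_inv, ite_mul, mul_ite, one_mul, mul_one, zero_mul, mul_zero,
    Finset.sum_ite_irrel, Finset.sum_ite_eq, Finset.sum_ite_eq', Finset.mem_univ, if_true,
    Finset.sum_const_zero]
  rw [Finset.sum_mul]
  refine Finset.sum_congr rfl fun i _ => ?_
  rw [Finset.sum_mul]

lemma QDaux4 : ∑ i, ∑ k, ∑ j, ∑ l, (B i j * B k l) *
      (2/15 * ((if i = j then (1:ℝ) else 0) * (if i = k then 1 else 0)
        * (if i = l then 1 else 0)))
    = 2/15 * ∑ i, B i i * B i i := by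
  simp only [div_eq_mul_inv, ite_mul, mul_ite, one_mul, mul_one, zero_mul, mul_zero,
    Finset.sum_ite_irrel, Finset.sum_ite_eq, Finset.sum_ite_eq', Finset.mem_univ, if_true,
    Finset.sum_const_zero]
  rw [Finset.mul_sum]
  refine Finset.sum_congr rfl fun i _ => ?_
  ring

lemma QDhQQ : ∫ x, (∑ i, ∑ j, x i * B i j * x j) * (∑ k, ∑ l, x k * B k l * x l) ∂(QDpi p)
    = (∑ i, B i i) * (∑ i, B i i) / 9 + (∑ i, ∑ j, B i j * B i j) / 9
      + (∑ i, ∑ j, B i j * B j i) / 9 - 2/15 * ∑ i, B i i * B i i := by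
  simp_rw [QDexpQQ]
  rw [integral_finset_sum _ fun i _ => integrable_finset_sum _ fun k _ =>
    integrable_finset_sum _ fun j _ => integrable_finset_sum _ fun l _ =>
      (QD_int4 i j k l).const_mul _]
  have step : ∀ i : Fin p,
      ∫ x, (∑ k, ∑ j, ∑ l, (B i j * B k l) * (x i * x j * x k * x l)) ∂(QDpi p)
      = ∑ k, ∑ j, ∑ l, (B i j * B k l) *
        ((if i = j then 1 else 0) * (if k = l then 1 else 0) / 9
        + (if i = k then 1 else 0) * (if j = l then 1 else 0) / 9
        + (if i = l then 1 else 0) * (if j = k then 1 else 0) / 9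
        - 2/15 * ((if i = j then 1 else 0) * (if i = k then 1 else 0)
            * (if i = l then 1 else 0))) := by
    intro i
    rw [integral_finset_sum _ fun k _ =>
      integrable_finset_sum _ fun j _ => integrable_finset_sum _ fun l _ =>
        (QD_int4 i j k l).const_mul _]
    refine Finset.sum_congr rfl fun k _ => ?_
    rw [integral_finset_sum _ fun j _ => integrable_finset_sum _ fun l _ =>
        (QD_int4 i j k l).const_mul _]
    refine Finset.sum_congr rfl fun j _ => ?_
    rw [integral_finset_sum _ fun l _ => (QD_int4 i j k l).const_mul _]
    refine Finset.sum_congr rfl fun l _ => ?_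
    rw [integral_const_mul, QDEI4]
  simp_rw [step]
  simp only [mul_add, mul_sub, Finset.sum_add_distrib, Finset.sum_sub_distrib]
  rw [QDaux1 B, QDaux2 B, QDaux3 B, QDaux4 B]


lemma QDkey {p : ℕ} (B : Matrix (Fin p) (Fin p) ℝ) (C : Fin p → ℝ) (A d : ℝ) :
    ∫ x, (A + (∑ i, ∑ j, x i * B i j * x j) + (∑ i, C i * x i) - d)^2 ∂(QDpi p)
    = (A - d + (∑ i, B i i)/3)^2
      + ((∑ i, ∑ j, B i j * B i j)/9 + (∑ i, ∑ j, B i j * B j i)/9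
        - 2/15 * ∑ i, B i i * B i i + (∑ i, C i * C i)/3) := by
  have iQ := QDintQ B
  have iL := QDintL C
  have iQQ := QDintQQ B
  have iQL := QDintQL B C
  have iLL := QDintLL C
  have hsplit : (fun x : Fin p → ℝ =>
      (A + (∑ i, ∑ j, x i * B i j * x j) + (∑ i, C i * x i) - d)^2)
      = fun x => ((A - d)^2
        + ((2*(A-d)) * (∑ i, ∑ j, x i * B i j * x j)
        + ((2*(A-d)) * (∑ i, C i * x i)
        + ((∑ i, ∑ j, x i * B i j * x j) * (∑ k, ∑ l, x k * B k l * x l)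
        + (2 * ((∑ i, ∑ j, x i * B i j * x j) * (∑ i, C i * x i))
        + (∑ i, C i * x i) * (∑ j, C j * x j)))))) := funext fun x => by ring
  have I5 : Integrable (fun x : Fin p → ℝ =>
      2 * ((∑ i, ∑ j, x i * B i j * x j) * (∑ i, C i * x i))
      + (∑ i, C i * x i) * (∑ j, C j * x j)) (QDpi p) := (iQL.const_mul _).add iLL
  have I4 : Integrable (fun x : Fin p → ℝ =>
      (∑ i, ∑ j, x i * B i j * x j) * (∑ k, ∑ l, x k * B k l * x l)
      + (2 * ((∑ i, ∑ j, x i * B i j * x j) * (∑ i, C i * x i))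
      + (∑ i, C i * x i) * (∑ j, C j * x j))) (QDpi p) := iQQ.add I5
  have I3 : Integrable (fun x : Fin p → ℝ =>
      (2*(A-d)) * (∑ i, C i * x i)
      + ((∑ i, ∑ j, x i * B i j * x j) * (∑ k, ∑ l, x k * B k l * x l)
      + (2 * ((∑ i, ∑ j, x i * B i j * x j) * (∑ i, C i * x i))
      + (∑ i, C i * x i) * (∑ j, C j * x j)))) (QDpi p) := (iL.const_mul _).add I4
  have I2 : Integrable (fun x : Fin p → ℝ =>
      (2*(A-d)) * (∑ i, ∑ j, x i * B i j * x j)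
      + ((2*(A-d)) * (∑ i, C i * x i)
      + ((∑ i, ∑ j, x i * B i j * x j) * (∑ k, ∑ l, x k * B k l * x l)
      + (2 * ((∑ i, ∑ j, x i * B i j * x j) * (∑ i, C i * x i))
      + (∑ i, C i * x i) * (∑ j, C j * x j))))) (QDpi p) := (iQ.const_mul _).add I3
  rw [hsplit]
  rw [integral_add (integrable_const _) I2]
  rw [integral_add (iQ.const_mul _) I3]
  rw [integral_add (iL.const_mul _) I4]
  rw [integral_add iQQ I5]
  rw [integral_add (iQL.const_mul _) iLL]
  rw [integral_const_mul, integral_const_mul, integral_const_mul]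
  rw [QDhQ, QDhL, QDhQQ, QDhQL, QDhLL]
  simp only [integral_const, measure_univ, probReal_univ, ENNReal.toReal_one, smul_eq_mul, one_mul]
  ring

/-- Inconsistency of feature-independent rules for the quadratic demand model:
for `X` uniform on `[−1,1]ᵖ` and `f_ρ(x) = A + xᵀBx + Cᵀx`, every constant `d`
satisfies `E[(f_ρ(X)−d)²] ≥ (2/9)tr(B²) − (2/15)ΣBᵢᵢ² + (1/3)CᵀC > 0`
whenever `B ≠ 0` or `C ≠ 0`. -/
theorem feature_independent_inconsistency_QD
    {Ω : Type*} [MeasurableSpace Ω] (μ : Measure Ω) [IsProbabilityMeasure μ]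
    (p : ℕ) (X : Fin p → Ω → ℝ)
    (hmeas : ∀ i, Measurable (X i))
    (hindep : iIndepFun X μ)
    (hunif : ∀ i, Measure.map (X i) μ
        = (2 : ℝ≥0∞)⁻¹ • (volume.restrict (Set.Icc (-1 : ℝ) 1)))
    (A : ℝ) (C : Fin p → ℝ) (B : Matrix (Fin p) (Fin p) ℝ) (hB : B.IsSymm)
    (hnz : B ≠ 0 ∨ C ≠ 0) :
    (∀ d : ℝ,
      2/9 * Matrix.trace (B * B) - 2/15 * ∑ i, (B i i)^2 + 1/3 * ∑ i, C i * C i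
        ≤ ∫ ω, (A + (∑ i, ∑ j, X i ω * B i j * X j ω) + (∑ i, C i * X i ω) - d)^2 ∂μ) ∧
    0 < 2/9 * Matrix.trace (B * B) - 2/15 * ∑ i, (B i i)^2 + 1/3 * ∑ i, C i * C i := by
  have hsym : ∀ i j, B j i = B i j := fun i j => hB.apply i j
  have htr : Matrix.trace (B * B) = ∑ i, ∑ j, (B i j)^2 := by
    simp only [Matrix.trace, Matrix.mul_apply, Matrix.diag]
    exact Finset.sum_congr rfl fun i _ => Finset.sum_congr rfl fun j _ => by
      rw [hsym]; ring
  have hd : (∑ i, (B i i)^2) ≤ ∑ i, ∑ j, (B i j)^2 :=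
    Finset.sum_le_sum fun i _ =>
      Finset.single_le_sum (f := fun j => (B i j)^2) (fun j _ => sq_nonneg _)
        (Finset.mem_univ i)
  have hC0 : 0 ≤ ∑ i, C i * C i := Finset.sum_nonneg fun i _ => mul_self_nonneg _
  constructor
  · intro d
    have hT : Measurable (fun ω (i : Fin p) => X i ω) := measurable_pi_lambda _ hmeas
    have hmap : Measure.map (fun ω (i : Fin p) => X i ω) μ = QDpi p := by
      refine (Measure.pi_eq fun s hs => ?_).symm
      rw [Measure.map_apply hT (MeasurableSet.univ_pi hs)]
      have hpre : (fun ω (i : Fin p) => X i ω) ⁻¹' Set.pi Set.univ s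
          = ⋂ i ∈ Finset.univ, X i ⁻¹' s i := by
        ext ω; simp [Set.mem_univ_pi]
      rw [hpre, iIndepFun_iff_measure_inter_preimage_eq_mul.mp hindep Finset.univ
        (fun i _ => hs i)]
      exact Finset.prod_congr rfl fun i _ => by
        rw [← Measure.map_apply (hmeas i) (hs i), hunif i]; rfl
    have m1 : Measurable fun x : Fin p → ℝ => ∑ i, ∑ j, x i * B i j * x j := by
      refine Finset.measurable_sum _ fun i _ => Finset.measurable_sum _ fun j _ => ?_
      exact ((measurable_pi_apply i).mul_const _).mul (measurable_pi_apply j)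
    have m2 : Measurable fun x : Fin p → ℝ => ∑ i, C i * x i :=
      Finset.measurable_sum _ fun i _ => (measurable_pi_apply i).const_mul _
    have hG : Measurable (fun x : Fin p → ℝ =>
        (A + (∑ i, ∑ j, x i * B i j * x j) + (∑ i, C i * x i) - d)^2) :=
      (((measurable_const.add m1).add m2).sub measurable_const).pow_const 2
    have hchg : ∫ ω, (A + (∑ i, ∑ j, X i ω * B i j * X j ω)
          + (∑ i, C i * X i ω) - d)^2 ∂μ
        = ∫ x, (A + (∑ i, ∑ j, x i * B i j * x j) + (∑ i, C i * x i) - d)^2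
            ∂(QDpi p) := by
      rw [← hmap, integral_map hT.aemeasurable hG.aestronglyMeasurable]
    rw [hchg, QDkey B C A d, htr]
    have e1 : (∑ i, ∑ j, B i j * B j i) = ∑ i, ∑ j, (B i j)^2 :=
      Finset.sum_congr rfl fun i _ => Finset.sum_congr rfl fun j _ => by
        rw [hsym]; ring
    have e2 : (∑ i, ∑ j, B i j * B i j) = ∑ i, ∑ j, (B i j)^2 :=
      Finset.sum_congr rfl fun i _ => Finset.sum_congr rfl fun j _ => by ring
    have e3 : (∑ i, B i i * B i i) = ∑ i, (B i i)^2 :=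
      Finset.sum_congr rfl fun i _ => by ring
    rw [e1, e2, e3]
    nlinarith [sq_nonneg (A - d + (∑ i, B i i)/3)]
  · rw [htr]
    rcases hnz with hBne | hCne
    · have hex : ∃ i j, B i j ≠ 0 := by
        by_contra h
        push_neg at h
        exact hBne (by ext i j; simp [h])
      obtain ⟨i0, j0, hij0⟩ := hex
      have h1 : 0 < ∑ i, ∑ j, (B i j)^2 := by
        have hp : 0 < (B i0 j0)^2 := by positivity
        calc (0:ℝ) < (B i0 j0)^2 := hp
        _ ≤ ∑ j, (B i0 j)^2 :=
            Finset.single_le_sum (f := fun j => (B i0 j)^2) (fun j _ => sq_nonneg _)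
              (Finset.mem_univ j0)
        _ ≤ ∑ i, ∑ j, (B i j)^2 :=
            Finset.single_le_sum (f := fun i => ∑ j, (B i j)^2)
              (fun i _ => Finset.sum_nonneg fun j _ => sq_nonneg _)
              (Finset.mem_univ i0)
      linarith
    · obtain ⟨i0, hi0⟩ : ∃ i, C i ≠ 0 := by
        by_contra h
        push_neg at h
        exact hCne (funext h)
      have h1 : 0 < ∑ i, C i * C i :=
        Finset.sum_pos' (fun i _ => mul_self_nonneg _)
          ⟨i0, Finset.mem_univ _, mul_self_pos.mpr hi0⟩
      have h2 : 0 ≤ ∑ i, ∑ j, (B i j)^2 :=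
        Finset.sum_nonneg fun i _ => Finset.sum_nonneg fun j _ => sq_nonneg _
      linarith
end

section
/- Let X be uniformly distributed on [−1,1]ᵖ and f_ρ(x) = A + xᵀBx + Cᵀx with B symmetric and B ≠ 0. Then for every affine function g(x) = d + Eᵀx with d ∈ ℝ, E ∈ ℝᵖ, E[(f_ρ(X) − g(X))²] ≥ (2/9)·tr(B²) − (2/15)·Σᵢ Bᵢᵢ² > 0. -/
open MeasureTheory ProbabilityTheory
open scoped ENNReal

namespace LRIQD

lemma unif_pow (k : ℕ) :
    ∫ x, x ^ k ∂((2 : ℝ≥0∞)⁻¹ • (volume.restrict (Set.Icc (-1 : ℝ) 1)))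
      = ((1:ℝ) - (-1:ℝ)^(k+1)) / (2*((k:ℝ)+1)) := by
  rw [integral_smul_measure, MeasureTheory.integral_Icc_eq_integral_Ioc,
    ← intervalIntegral.integral_of_le (by norm_num : (-1:ℝ) ≤ 1),
    _root_.integral_pow]
  simp only [ENNReal.toReal_inv, ENNReal.toReal_ofNat, smul_eq_mul, one_pow]
  have : ((k:ℝ)+1) ≠ 0 := by positivity
  field_simp

variable {Ω : Type*} [MeasurableSpace Ω] {μ : Measure Ω} [IsProbabilityMeasure μ]
  {p : ℕ} {X : Fin p → Ω → ℝ}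

section Basic

variable (hmeas : ∀ i, Measurable (X i))
  (hindep : iIndepFun X μ)
  (hunif : ∀ i, Measure.map (X i) μ
        = (2 : ℝ≥0∞)⁻¹ • (volume.restrict (Set.Icc (-1 : ℝ) 1)))

include hmeas hunif in
lemma momX (i : Fin p) (k : ℕ) :
    ∫ ω, X i ω ^ k ∂μ = ((1:ℝ) - (-1:ℝ)^(k+1)) / (2*((k:ℝ)+1)) := by
  rw [← MeasureTheory.integral_map (φ := X i) (f := fun x => x ^ k)
      (hmeas i).aemeasurable ((measurable_id.pow_const k).aestronglyMeasurable),
    hunif i, unif_pow]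

include hmeas hunif in
lemma aebd (i : Fin p) : ∀ᵐ ω ∂μ, |X i ω| ≤ 1 := by
  have h0 : μ {ω | X i ω ∉ Set.Icc (-1:ℝ) 1} = 0 := by
    have he : {ω | X i ω ∉ Set.Icc (-1:ℝ) 1} = X i ⁻¹' (Set.Icc (-1:ℝ) 1)ᶜ := rfl
    rw [he, ← Measure.map_apply (hmeas i) measurableSet_Icc.compl, hunif i]
    simp [Measure.restrict_apply measurableSet_Icc.compl]
  have h1 : ∀ᵐ ω ∂μ, X i ω ∈ Set.Icc (-1:ℝ) 1 := by
    rw [ae_iff]; exact h0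
  filter_upwards [h1] with ω hω
  rw [abs_le]; exact ⟨hω.1, hω.2⟩

lemma intbd {F : Ω → ℝ} (hm : AEStronglyMeasurable F μ) {c : ℝ}
    (h : ∀ᵐ ω ∂μ, |F ω| ≤ c) : Integrable F μ :=
  (integrable_const c).mono' hm (by simpa [Real.norm_eq_abs] using h)

include hmeas hunif in
lemma Ipow (i : Fin p) (k : ℕ) : Integrable (fun ω => X i ω ^ k) μ := by
  refine intbd (c := 1) ((hmeas i).pow_const k).aestronglyMeasurable ?_
  filter_upwards [aebd hmeas hunif i] with ω h
  rw [abs_pow]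
  exact pow_le_one₀ (abs_nonneg _) h

include hmeas hunif in
lemma I1 (i : Fin p) : Integrable (X i) μ :=
  intbd (hmeas i).aestronglyMeasurable (aebd hmeas hunif i)

include hmeas hunif in
lemma Imul (i j : Fin p) : Integrable (X i * X j) μ := by
  refine intbd (c := 1) ((hmeas i).mul (hmeas j)).aestronglyMeasurable ?_
  filter_upwards [aebd hmeas hunif i, aebd hmeas hunif j] with ω h1 h2
  have : |X i ω * X j ω| = |X i ω| * |X j ω| := abs_mul _ _
  rw [Pi.mul_apply, this]
  nlinarith [abs_nonneg (X i ω), abs_nonneg (X j ω)]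

-- moments
include hmeas hunif in
lemma mom1 (i : Fin p) : ∫ ω, X i ω ∂μ = 0 := by
  have h := momX hmeas hunif i 1
  simpa using h

include hmeas hunif in
lemma mom2 (i : Fin p) : ∫ ω, X i ω ^ 2 ∂μ = 1/3 := by
  have h := momX hmeas hunif i 2
  norm_num at h; linarith

include hmeas hunif in
lemma mom3 (i : Fin p) : ∫ ω, X i ω ^ 3 ∂μ = 0 := by
  have h := momX hmeas hunif i 3
  norm_num at h; linarith

include hmeas hunif in
lemma mom4 (i : Fin p) : ∫ ω, X i ω ^ 4 ∂μ = 1/5 := by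
  have h := momX hmeas hunif i 4
  norm_num at h; linarith

include hmeas hindep hunif in
lemma Ppair {i j : Fin p} (hij : i ≠ j) (a b : ℕ) :
    ∫ ω, X i ω ^ a * X j ω ^ b ∂μ
      = (∫ ω, X i ω ^ a ∂μ) * (∫ ω, X j ω ^ b ∂μ) := by
  have h := ((hindep.indepFun hij).comp
      (measurable_id.pow_const a) (measurable_id.pow_const b)).integral_mul_eq_mul_integral
      (Ipow hmeas hunif i a).aestronglyMeasurable (Ipow hmeas hunif j b).aestronglyMeasurable
  simpa [Function.comp] using h

include hmeas hindep hunif in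
lemma P2 (i j : Fin p) :
    ∫ ω, X i ω * X j ω ∂μ = if i = j then (1/3 : ℝ) else 0 := by
  by_cases hij : i = j
  · subst hij
    rw [if_pos rfl, show (fun ω => X i ω * X i ω) = fun ω => X i ω ^ 2 from
      funext fun ω => by ring]
    exact mom2 hmeas hunif i
  · rw [if_neg hij, show (fun ω => X i ω * X j ω) = fun ω => X i ω ^ 1 * X j ω ^ 1 from
      funext fun ω => by ring, Ppair hmeas hindep hunif hij 1 1]
    simp [mom1 hmeas hunif i]

-- triple products integrate to zero
include hmeas hindep hunif in
lemma T (i j k : Fin p) : ∫ ω, X i ω * X j ω * X k ω ∂μ = 0 := by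
  by_cases hij : i = j
  · subst hij
    by_cases hik : i = k
    · subst hik
      rw [show (fun ω => X i ω * X i ω * X i ω) = fun ω => X i ω ^ 3 from
        funext fun ω => by ring]
      exact mom3 hmeas hunif i
    · rw [show (fun ω => X i ω * X i ω * X k ω) = fun ω => X i ω ^ 2 * X k ω ^ 1 from
        funext fun ω => by ring, Ppair hmeas hindep hunif hik 2 1]
      simp [mom1 hmeas hunif k]
  · by_cases hik : i = k
    · subst hik
      rw [show (fun ω => X i ω * X j ω * X i ω) = fun ω => X i ω ^ 2 * X j ω ^ 1 from
        funext fun ω => by ring, Ppair hmeas hindep hunif hij 2 1]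
      simp [mom1 hmeas hunif j]
    · by_cases hjk : j = k
      · subst hjk
        rw [show (fun ω => X i ω * X j ω * X j ω) = fun ω => X i ω ^ 1 * X j ω ^ 2 from
          funext fun ω => by ring, Ppair hmeas hindep hunif hij 1 2]
        simp [mom1 hmeas hunif i]
      · -- all distinct
        have h := (hindep.indepFun_mul_left hmeas i j k hik hjk).integral_mul_eq_mul_integral
          (Imul hmeas hunif i j).aestronglyMeasurable (I1 hmeas hunif k).aestronglyMeasurable
        have h2 : ∫ ω, X i ω * X j ω * X k ω ∂μ
            = (∫ ω, X i ω * X j ω ∂μ) * ∫ ω, X k ω ∂μ := h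
        rw [h2, mom1 hmeas hunif k, mul_zero]

-- quadruple products
include hmeas hindep hunif in
lemma M (i j k l : Fin p) :
    ∫ ω, X i ω * X j ω * X k ω * X l ω ∂μ
      = 1/9 * ((if i = j then (1:ℝ) else 0) * (if k = l then 1 else 0)
             + (if i = k then 1 else 0) * (if j = l then 1 else 0)
             + (if i = l then 1 else 0) * (if j = k then 1 else 0))
        - 2/15 * ((if i = j then 1 else 0) * (if i = k then 1 else 0)
             * (if i = l then 1 else 0)) := by
  by_cases hij : i = j
  · subst hij
    by_cases hik : i = k
    · subst hik
      by_cases hil : i = l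
      · subst hil
        rw [show (fun ω => X i ω * X i ω * X i ω * X i ω) = fun ω => X i ω ^ 4 from
          funext fun ω => by ring, mom4 hmeas hunif i]
        norm_num
      · rw [show (fun ω => X i ω * X i ω * X i ω * X l ω)
            = fun ω => X i ω ^ 3 * X l ω ^ 1 from funext fun ω => by ring,
          Ppair hmeas hindep hunif hil 3 1]
        simp [mom1 hmeas hunif l, hil, (Ne.symm hil)]
    · by_cases hil : i = l
      · subst hil
        rw [show (fun ω => X i ω * X i ω * X k ω * X i ω)
            = fun ω => X i ω ^ 3 * X k ω ^ 1 from funext fun ω => by ring,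
          Ppair hmeas hindep hunif hik 3 1]
        simp [mom1 hmeas hunif k, hik, Ne.symm hik]
      · by_cases hkl : k = l
        · subst hkl
          rw [show (fun ω => X i ω * X i ω * X k ω * X k ω)
              = fun ω => X i ω ^ 2 * X k ω ^ 2 from funext fun ω => by ring,
            Ppair hmeas hindep hunif hik 2 2, mom2 hmeas hunif i, mom2 hmeas hunif k]
          simp [hik, hil]
          norm_num
        · -- i=j, and i,k,l distinct
          rw [show (fun ω => X i ω * X i ω * X k ω * X l ω)
              = fun ω => X i ω ^ 2 * (X k ω * X l ω) from funext fun ω => by ring]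
          have hind : IndepFun (fun ω => X i ω ^ 2) (X k * X l) μ := by
            have h0 := (hindep.indepFun_mul_right hmeas i k l hik hil)
            have := h0.comp (measurable_id.pow_const 2) measurable_id
            exact this
          have h := hind.integral_mul_eq_mul_integral (Ipow hmeas hunif i 2).aestronglyMeasurable
            (Imul hmeas hunif k l).aestronglyMeasurable
          have h2 : ∫ ω, X i ω ^ 2 * (X k ω * X l ω) ∂μ
              = (∫ ω, X i ω ^ 2 ∂μ) * ∫ ω, X k ω * X l ω ∂μ := h
          rw [h2, P2 hmeas hindep hunif k l, if_neg hkl, mul_zero]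
          simp [hik, hil, hkl]
  · by_cases hik : i = k
    · subst hik
      by_cases hjl : j = l
      · subst hjl
        rw [show (fun ω => X i ω * X j ω * X i ω * X j ω)
            = fun ω => X i ω ^ 2 * X j ω ^ 2 from funext fun ω => by ring,
          Ppair hmeas hindep hunif hij 2 2, mom2 hmeas hunif i, mom2 hmeas hunif j]
        simp [hij, fun h : i = j => hij h]
        norm_num
      · by_cases hil : i = l
        · subst hil
          rw [show (fun ω => X i ω * X j ω * X i ω * X i ω)
              = fun ω => X i ω ^ 3 * X j ω ^ 1 from funext fun ω => by ring,
            Ppair hmeas hindep hunif hij 3 1]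
          simp [mom1 hmeas hunif j, hij, hjl]
        · -- i=k, and i,j,l distinct
          rw [show (fun ω => X i ω * X j ω * X i ω * X l ω)
              = fun ω => X i ω ^ 2 * (X j ω * X l ω) from funext fun ω => by ring]
          have hind : IndepFun (fun ω => X i ω ^ 2) (X j * X l) μ := by
            have h0 := (hindep.indepFun_mul_right hmeas i j l hij hil)
            have := h0.comp (measurable_id.pow_const 2) measurable_id
            exact this
          have h := hind.integral_mul_eq_mul_integral (Ipow hmeas hunif i 2).aestronglyMeasurable
            (Imul hmeas hunif j l).aestronglyMeasurable
          have h2 : ∫ ω, X i ω ^ 2 * (X j ω * X l ω) ∂μ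
              = (∫ ω, X i ω ^ 2 ∂μ) * ∫ ω, X j ω * X l ω ∂μ := h
          rw [h2, P2 hmeas hindep hunif j l, if_neg hjl, mul_zero]
          simp [hij, hjl, hil]
    · by_cases hil : i = l
      · subst hil
        by_cases hjk : j = k
        · subst hjk
          rw [show (fun ω => X i ω * X j ω * X j ω * X i ω)
              = fun ω => X i ω ^ 2 * X j ω ^ 2 from funext fun ω => by ring,
            Ppair hmeas hindep hunif hij 2 2, mom2 hmeas hunif i, mom2 hmeas hunif j]
          simp [hij, hik]
          norm_num
        · -- i=l, and i,j,k distinct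
          rw [show (fun ω => X i ω * X j ω * X k ω * X i ω)
              = fun ω => X i ω ^ 2 * (X j ω * X k ω) from funext fun ω => by ring]
          have hind : IndepFun (fun ω => X i ω ^ 2) (X j * X k) μ := by
            have h0 := (hindep.indepFun_mul_right hmeas i j k hij hik)
            have := h0.comp (measurable_id.pow_const 2) measurable_id
            exact this
          have h := hind.integral_mul_eq_mul_integral (Ipow hmeas hunif i 2).aestronglyMeasurable
            (Imul hmeas hunif j k).aestronglyMeasurable
          have h2 : ∫ ω, X i ω ^ 2 * (X j ω * X k ω) ∂μ
              = (∫ ω, X i ω ^ 2 ∂μ) * ∫ ω, X j ω * X k ω ∂μ := h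
          rw [h2, P2 hmeas hindep hunif j k, if_neg hjk, mul_zero]
          simp [hij, hik, hjk]
      · -- i distinct from j, k, l
        by_cases hjk : j = k
        · subst hjk
          by_cases hjl : j = l
          · subst hjl
            rw [show (fun ω => X i ω * X j ω * X j ω * X j ω)
                = fun ω => X i ω ^ 1 * X j ω ^ 3 from funext fun ω => by ring,
              Ppair hmeas hindep hunif hij 1 3]
            simp [mom3 hmeas hunif j, hij, hik, hil]
          · -- j=k, and i,j,l distinct
            rw [show (fun ω => X i ω * X j ω * X j ω * X l ω)
                = fun ω => X j ω ^ 2 * (X i ω * X l ω) from funext fun ω => by ring]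
            have hind : IndepFun (fun ω => X j ω ^ 2) (X i * X l) μ := by
              have h0 := (hindep.indepFun_mul_right hmeas j i l (Ne.symm hij) hjl)
              have := h0.comp (measurable_id.pow_const 2) measurable_id
              exact this
            have h := hind.integral_mul_eq_mul_integral (Ipow hmeas hunif j 2).aestronglyMeasurable
              (Imul hmeas hunif i l).aestronglyMeasurable
            have h2 : ∫ ω, X j ω ^ 2 * (X i ω * X l ω) ∂μ
                = (∫ ω, X j ω ^ 2 ∂μ) * ∫ ω, X i ω * X l ω ∂μ := h
            rw [h2, P2 hmeas hindep hunif i l, if_neg hil, mul_zero]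
            simp [hij, hik, hil, hjl]
        · by_cases hjl : j = l
          · subst hjl
            -- j=l, and i,j,k distinct
            rw [show (fun ω => X i ω * X j ω * X k ω * X j ω)
                = fun ω => X j ω ^ 2 * (X i ω * X k ω) from funext fun ω => by ring]
            have hind : IndepFun (fun ω => X j ω ^ 2) (X i * X k) μ := by
              have h0 := (hindep.indepFun_mul_right hmeas j i k (Ne.symm hij) hjk)
              have := h0.comp (measurable_id.pow_const 2) measurable_id
              exact this
            have h := hind.integral_mul_eq_mul_integral (Ipow hmeas hunif j 2).aestronglyMeasurable
              (Imul hmeas hunif i k).aestronglyMeasurable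
            have h2 : ∫ ω, X j ω ^ 2 * (X i ω * X k ω) ∂μ
                = (∫ ω, X j ω ^ 2 ∂μ) * ∫ ω, X i ω * X k ω ∂μ := h
            rw [h2, P2 hmeas hindep hunif i k, if_neg hik, mul_zero]
            simp [hij, hik, hil, hjk]
          · by_cases hkl : k = l
            · subst hkl
              -- k=l, and i,j,k distinct
              rw [show (fun ω => X i ω * X j ω * X k ω * X k ω)
                  = fun ω => X k ω ^ 2 * (X i ω * X j ω) from funext fun ω => by ring]
              have hind : IndepFun (fun ω => X k ω ^ 2) (X i * X j) μ := by
                have h0 := (hindep.indepFun_mul_right hmeas k i j (Ne.symm hik) (Ne.symm hjk))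
                have := h0.comp (measurable_id.pow_const 2) measurable_id
                exact this
              have h := hind.integral_mul_eq_mul_integral (Ipow hmeas hunif k 2).aestronglyMeasurable
                (Imul hmeas hunif i j).aestronglyMeasurable
              have h2 : ∫ ω, X k ω ^ 2 * (X i ω * X j ω) ∂μ
                  = (∫ ω, X k ω ^ 2 ∂μ) * ∫ ω, X i ω * X j ω ∂μ := h
              rw [h2, P2 hmeas hindep hunif i j, if_neg hij, mul_zero]
              simp [hij, hik, hil, hjk, hjl]
            · -- all distinct
              have hind := hindep.indepFun_mul_mul hmeas i j k l hik hil hjk hjl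
              have h := hind.integral_mul_eq_mul_integral (Imul hmeas hunif i j).aestronglyMeasurable
                (Imul hmeas hunif k l).aestronglyMeasurable
              have h2 : ∫ ω, X i ω * X j ω * (X k ω * X l ω) ∂μ
                  = (∫ ω, X i ω * X j ω ∂μ) * ∫ ω, X k ω * X l ω ∂μ := h
              rw [show (fun ω => X i ω * X j ω * X k ω * X l ω)
                  = fun ω => X i ω * X j ω * (X k ω * X l ω) from
                  funext fun ω => by ring, h2, P2 hmeas hindep hunif i j, if_neg hij, zero_mul]
              simp [hij, hik, hil, hjk, hjl, hkl]

include hmeas hunif in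
lemma Imul3 (i j k : Fin p) : Integrable (fun ω => X i ω * X j ω * X k ω) μ := by
  refine intbd (c := 1) (((hmeas i).mul (hmeas j)).mul (hmeas k)).aestronglyMeasurable ?_
  filter_upwards [aebd hmeas hunif i, aebd hmeas hunif j, aebd hmeas hunif k] with ω h1 h2 h3
  rw [abs_mul, abs_mul]
  have h12 : |X i ω| * |X j ω| ≤ 1 := by nlinarith [abs_nonneg (X i ω), abs_nonneg (X j ω)]
  have h12n : (0:ℝ) ≤ |X i ω| * |X j ω| := mul_nonneg (abs_nonneg _) (abs_nonneg _)
  nlinarith [abs_nonneg (X k ω)]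

include hmeas hunif in
lemma Imul4 (i j k l : Fin p) : Integrable (fun ω => X i ω * X j ω * X k ω * X l ω) μ := by
  refine intbd (c := 1)
    ((((hmeas i).mul (hmeas j)).mul (hmeas k)).mul (hmeas l)).aestronglyMeasurable ?_
  filter_upwards [aebd hmeas hunif i, aebd hmeas hunif j, aebd hmeas hunif k,
    aebd hmeas hunif l] with ω h1 h2 h3 h4
  rw [abs_mul, abs_mul, abs_mul]
  have h12 : |X i ω| * |X j ω| ≤ 1 := by nlinarith [abs_nonneg (X i ω), abs_nonneg (X j ω)]
  have h12n : (0:ℝ) ≤ |X i ω| * |X j ω| := mul_nonneg (abs_nonneg _) (abs_nonneg _)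
  have h123 : |X i ω| * |X j ω| * |X k ω| ≤ 1 := by nlinarith [abs_nonneg (X k ω)]
  have h123n : (0:ℝ) ≤ |X i ω| * |X j ω| * |X k ω| := mul_nonneg h12n (abs_nonneg _)
  nlinarith [abs_nonneg (X l ω)]

end Basic

lemma deltasum (p : ℕ) (B : Matrix (Fin p) (Fin p) ℝ) :
    ∑ i, ∑ k, ∑ j, ∑ l, (B i j * B k l) *
      (1/9 * ((if i = j then (1:ℝ) else 0) * (if k = l then 1 else 0)
             + (if i = k then 1 else 0) * (if j = l then 1 else 0)
             + (if i = l then 1 else 0) * (if j = k then 1 else 0))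
        - 2/15 * ((if i = j then 1 else 0) * (if i = k then 1 else 0)
             * (if i = l then 1 else 0)))
      = 1/9 * (∑ i, B i i)^2 + 1/9 * (∑ i, ∑ j, (B i j)^2)
        + 1/9 * (∑ i, ∑ j, B i j * B j i) - 2/15 * ∑ i, (B i i)^2 := by
  have expand : ∀ i k j l : Fin p, (B i j * B k l) *
      (1/9 * ((if i = j then (1:ℝ) else 0) * (if k = l then 1 else 0)
             + (if i = k then 1 else 0) * (if j = l then 1 else 0)
             + (if i = l then 1 else 0) * (if j = k then 1 else 0))
        - 2/15 * ((if i = j then 1 else 0) * (if i = k then 1 else 0)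
             * (if i = l then 1 else 0)))
      = 1/9 * ((B i j * B k l) * ((if i = j then (1:ℝ) else 0) * (if k = l then 1 else 0)))
        + 1/9 * ((B i j * B k l) * ((if i = k then (1:ℝ) else 0) * (if j = l then 1 else 0)))
        + 1/9 * ((B i j * B k l) * ((if i = l then (1:ℝ) else 0) * (if j = k then 1 else 0)))
        - 2/15 * ((B i j * B k l) * ((if i = j then (1:ℝ) else 0) * (if i = k then 1 else 0)
             * (if i = l then 1 else 0))) := by
    intro i k j l; ring
  simp only [expand, Finset.sum_add_distrib, Finset.sum_sub_distrib, ← Finset.mul_sum]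
  have e1 : ∑ i : Fin p, ∑ k : Fin p, ∑ j : Fin p, ∑ l : Fin p,
      (B i j * B k l) * ((if i = j then (1:ℝ) else 0) * (if k = l then 1 else 0))
      = (∑ i, B i i)^2 := by
    simp only [mul_ite, ite_mul, mul_one, mul_zero, one_mul, zero_mul,
      Finset.sum_ite_eq, Finset.mem_univ, if_true]
    rw [sq, Finset.sum_mul_sum]
  have e2 : ∑ i : Fin p, ∑ k : Fin p, ∑ j : Fin p, ∑ l : Fin p,
      (B i j * B k l) * ((if i = k then (1:ℝ) else 0) * (if j = l then 1 else 0))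
      = ∑ i, ∑ j, (B i j)^2 := by
    simp only [mul_ite, ite_mul, mul_one, mul_zero, one_mul, zero_mul,
      Finset.sum_ite_eq, Finset.mem_univ, if_true, sq]
    refine Finset.sum_congr rfl fun x _ => ?_
    rw [Finset.sum_comm]
    simp [Finset.sum_ite_eq]
  have e3 : ∑ i : Fin p, ∑ k : Fin p, ∑ j : Fin p, ∑ l : Fin p,
      (B i j * B k l) * ((if i = l then (1:ℝ) else 0) * (if j = k then 1 else 0))
      = ∑ i, ∑ j, B i j * B j i := by
    refine Finset.sum_congr rfl fun i _ => ?_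
    have h1 : ∀ k j : Fin p, ∑ l, (B i j * B k l) *
        ((if i = l then (1:ℝ) else 0) * (if j = k then 1 else 0))
        = (B i j * B k i) * (if j = k then 1 else 0) := by
      intro k j
      rw [Finset.sum_congr rfl (fun l _ => show _ = (if i = l then (B i j * B k l) *
        (if j = k then (1:ℝ) else 0) else 0) from by by_cases h : i = l <;> simp [h])]
      rw [Finset.sum_ite_eq]
      simp
    simp only [h1]
    rw [Finset.sum_comm]
    simp [mul_ite, Finset.sum_ite_eq']
  have e4 : ∑ i : Fin p, ∑ k : Fin p, ∑ j : Fin p, ∑ l : Fin p,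
      (B i j * B k l) * ((if i = j then (1:ℝ) else 0) * (if i = k then 1 else 0)
        * (if i = l then 1 else 0))
      = ∑ i, (B i i)^2 := by
    simp only [mul_ite, ite_mul, mul_one, mul_zero, one_mul, zero_mul,
      Finset.sum_ite_eq, Finset.mem_univ, if_true, sq]
    refine Finset.sum_congr rfl fun x _ => ?_
    rw [Finset.sum_comm]
    simp [Finset.sum_ite_eq]
  rw [e1, e2, e3, e4]

section Main

variable (hmeas : ∀ i, Measurable (X i))
  (hindep : iIndepFun X μ)
  (hunif : ∀ i, Measure.map (X i) μ
        = (2 : ℝ≥0∞)⁻¹ • (volume.restrict (Set.Icc (-1 : ℝ) 1)))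

include hmeas hindep hunif in
lemma integral_sq_eq (B : Matrix (Fin p) (Fin p) ℝ) (a : ℝ) (L : Fin p → ℝ) :
    ∫ ω, (a + (∑ i, ∑ j, X i ω * B i j * X j ω) + ∑ i, L i * X i ω)^2 ∂μ
      = (a + (∑ i, B i i)/3)^2
        + (1/9 * (∑ i, ∑ j, (B i j)^2) + 1/9 * (∑ i, ∑ j, B i j * B j i)
            - 2/15 * ∑ i, (B i i)^2)
        + (1/3) * ∑ i, (L i)^2 := by
  classical
  set Q : Ω → ℝ := fun ω => ∑ i, ∑ j, X i ω * B i j * X j ω with hQdef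
  set Lx : Ω → ℝ := fun ω => ∑ i, L i * X i ω with hLxdef
  set cB : ℝ := ∑ i, ∑ j, |B i j| with hcB
  set cL : ℝ := ∑ i, |L i| with hcL
  have hcB0 : 0 ≤ cB := Finset.sum_nonneg fun _ _ => Finset.sum_nonneg fun _ _ => abs_nonneg _
  have hcL0 : 0 ≤ cL := Finset.sum_nonneg fun _ _ => abs_nonneg _
  have mQ : Measurable Q := by
    refine Finset.measurable_sum _ fun i _ => Finset.measurable_sum _ fun j _ => ?_
    exact ((hmeas i).mul_const _).mul (hmeas j)
  have mLx : Measurable Lx := Finset.measurable_sum _ fun i _ => (hmeas i).const_mul _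
  have haeb : ∀ᵐ ω ∂μ, ∀ i, |X i ω| ≤ 1 := ae_all_iff.2 fun i => aebd hmeas hunif i
  have hQb : ∀ ω, (∀ i, |X i ω| ≤ 1) → |Q ω| ≤ cB := by
    intro ω h
    calc |Q ω| ≤ ∑ i, |∑ j, X i ω * B i j * X j ω| := Finset.abs_sum_le_sum_abs _ _
      _ ≤ ∑ i, ∑ j, |X i ω * B i j * X j ω| :=
          Finset.sum_le_sum fun i _ => Finset.abs_sum_le_sum_abs _ _
      _ ≤ cB := by
          refine Finset.sum_le_sum fun i _ => Finset.sum_le_sum fun j _ => ?_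
          rw [abs_mul, abs_mul]
          have h2 : |X i ω| * |B i j| ≤ |B i j| := by
            nlinarith [abs_nonneg (B i j), abs_nonneg (X i ω), h i]
          nlinarith [mul_nonneg (abs_nonneg (X i ω)) (abs_nonneg (B i j)), h j,
            abs_nonneg (X j ω)]
  have hLb : ∀ ω, (∀ i, |X i ω| ≤ 1) → |Lx ω| ≤ cL := by
    intro ω h
    calc |Lx ω| ≤ ∑ i, |L i * X i ω| := Finset.abs_sum_le_sum_abs _ _
      _ ≤ cL := by
          refine Finset.sum_le_sum fun i _ => ?_
          rw [abs_mul]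
          nlinarith [abs_nonneg (L i), abs_nonneg (X i ω), h i]
  have iQ : Integrable Q μ :=
    intbd mQ.aestronglyMeasurable ((haeb.mono) fun ω h => hQb ω h)
  have iLx : Integrable Lx μ :=
    intbd mLx.aestronglyMeasurable ((haeb.mono) fun ω h => hLb ω h)
  have iQ2 : Integrable (fun ω => Q ω^2) μ := by
    refine intbd (c := cB^2) (mQ.pow_const 2).aestronglyMeasurable
      ((haeb.mono) fun ω h => ?_)
    rw [abs_pow]
    exact pow_le_pow_left₀ (abs_nonneg _) (hQb ω h) 2
  have iLx2 : Integrable (fun ω => Lx ω^2) μ := by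
    refine intbd (c := cL^2) (mLx.pow_const 2).aestronglyMeasurable
      ((haeb.mono) fun ω h => ?_)
    rw [abs_pow]
    exact pow_le_pow_left₀ (abs_nonneg _) (hLb ω h) 2
  have iQLx : Integrable (fun ω => Q ω * Lx ω) μ := by
    refine intbd (c := cB * cL) (mQ.mul mLx).aestronglyMeasurable
      ((haeb.mono) fun ω h => ?_)
    rw [abs_mul]
    exact mul_le_mul (hQb ω h) (hLb ω h) (abs_nonneg _) hcB0
  -- term-level integrability
  have iterm : ∀ i j, Integrable (fun ω => X i ω * B i j * X j ω) μ := by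
    intro i j
    rw [show (fun ω => X i ω * B i j * X j ω)
        = fun ω => B i j * (X i ω * X j ω) from funext fun ω => by ring]
    exact (Imul hmeas hunif i j).const_mul _
  have iterm2 : ∀ i j, Integrable (fun ω => (L i * X i ω) * (L j * X j ω)) μ := by
    intro i j
    rw [show (fun ω => (L i * X i ω) * (L j * X j ω))
        = fun ω => (L i * L j) * (X i ω * X j ω) from funext fun ω => by ring]
    exact (Imul hmeas hunif i j).const_mul _
  have iterm3 : ∀ i j k, Integrable (fun ω => (X i ω * B i j * X j ω) * (L k * X k ω)) μ := by
    intro i j k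
    rw [show (fun ω => (X i ω * B i j * X j ω) * (L k * X k ω))
        = fun ω => (B i j * L k) * (X i ω * X j ω * X k ω) from funext fun ω => by ring]
    exact (Imul3 hmeas hunif i j k).const_mul _
  have iterm4 : ∀ i j k l,
      Integrable (fun ω => (X i ω * B i j * X j ω) * (X k ω * B k l * X l ω)) μ := by
    intro i j k l
    rw [show (fun ω => (X i ω * B i j * X j ω) * (X k ω * B k l * X l ω))
        = fun ω => (B i j * B k l) * (X i ω * X j ω * X k ω * X l ω) from
        funext fun ω => by ring]
    exact (Imul4 hmeas hunif i j k l).const_mul _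
  -- values of the pieces
  have EQ : ∫ ω, Q ω ∂μ = (∑ i, B i i)/3 := by
    have h1 : ∫ ω, Q ω ∂μ = ∑ i, ∑ j, B i j * (if i = j then (1/3:ℝ) else 0) := by
      rw [hQdef, integral_finset_sum _ fun i _ =>
        integrable_finset_sum _ fun j _ => iterm i j]
      refine Finset.sum_congr rfl fun i _ => ?_
      rw [integral_finset_sum _ fun j _ => iterm i j]
      refine Finset.sum_congr rfl fun j _ => ?_
      rw [show (fun ω => X i ω * B i j * X j ω)
          = fun ω => B i j * (X i ω * X j ω) from funext fun ω => by ring,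
        integral_const_mul, P2 hmeas hindep hunif i j]
    rw [h1]
    simp only [mul_ite, mul_zero, Finset.sum_ite_eq, Finset.mem_univ, if_true]
    rw [Finset.sum_div]
    exact Finset.sum_congr rfl fun i _ => by ring
  have ELx : ∫ ω, Lx ω ∂μ = 0 := by
    rw [hLxdef, integral_finset_sum _ fun i _ => (I1 hmeas hunif i).const_mul _]
    simp [integral_const_mul, mom1 hmeas hunif]
  have ELx2 : ∫ ω, Lx ω^2 ∂μ = (1/3) * ∑ i, (L i)^2 := by
    have h0 : (fun ω => Lx ω^2) = fun ω => ∑ i, ∑ j, (L i * X i ω) * (L j * X j ω) := by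
      funext ω; rw [sq, hLxdef]; exact Finset.sum_mul_sum _ _ _ _
    rw [h0, integral_finset_sum _ fun i _ => integrable_finset_sum _ fun j _ => iterm2 i j]
    have h1 : ∀ i j : Fin p, ∫ ω, (L i * X i ω) * (L j * X j ω) ∂μ
        = (L i * L j) * (if i = j then (1/3:ℝ) else 0) := by
      intro i j
      rw [show (fun ω => (L i * X i ω) * (L j * X j ω))
          = fun ω => (L i * L j) * (X i ω * X j ω) from funext fun ω => by ring,
        integral_const_mul, P2 hmeas hindep hunif i j]
    have h2 : ∀ i : Fin p, ∫ ω, ∑ j, (L i * X i ω) * (L j * X j ω) ∂μ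
        = ∑ j, (L i * L j) * (if i = j then (1/3:ℝ) else 0) := by
      intro i
      rw [integral_finset_sum _ fun j _ => iterm2 i j]
      exact Finset.sum_congr rfl fun j _ => h1 i j
    simp only [h2]
    simp only [mul_ite, mul_zero, Finset.sum_ite_eq, Finset.mem_univ, if_true]
    rw [Finset.mul_sum]
    exact Finset.sum_congr rfl fun i _ => by ring
  have EQLx : ∫ ω, Q ω * Lx ω ∂μ = 0 := by
    have h0 : (fun ω => Q ω * Lx ω)
        = fun ω => ∑ i, ∑ k, ∑ j, (X i ω * B i j * X j ω) * (L k * X k ω) := by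
      funext ω; rw [hQdef, hLxdef]
      rw [Finset.sum_mul_sum]
      exact Finset.sum_congr rfl fun i _ => Finset.sum_congr rfl fun k _ =>
        Finset.sum_mul _ _ _
    rw [h0, integral_finset_sum _ fun i _ => integrable_finset_sum _ fun k _ =>
      integrable_finset_sum _ fun j _ => iterm3 i j k]
    have h1 : ∀ i k : Fin p, ∫ ω, ∑ j, (X i ω * B i j * X j ω) * (L k * X k ω) ∂μ = 0 := by
      intro i k
      rw [integral_finset_sum _ fun j _ => iterm3 i j k]
      refine Finset.sum_eq_zero fun j _ => ?_
      rw [show (fun ω => (X i ω * B i j * X j ω) * (L k * X k ω))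
          = fun ω => (B i j * L k) * (X i ω * X j ω * X k ω) from funext fun ω => by ring,
        integral_const_mul, T hmeas hindep hunif i j k, mul_zero]
    refine Finset.sum_eq_zero fun i _ => ?_
    rw [integral_finset_sum _ fun k _ => integrable_finset_sum _ fun j _ => iterm3 i j k]
    exact Finset.sum_eq_zero fun k _ => h1 i k
  have EQ2 : ∫ ω, Q ω^2 ∂μ
      = 1/9 * (∑ i, B i i)^2 + 1/9 * (∑ i, ∑ j, (B i j)^2)
        + 1/9 * (∑ i, ∑ j, B i j * B j i) - 2/15 * ∑ i, (B i i)^2 := by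
    have h0 : (fun ω => Q ω^2)
        = fun ω => ∑ i, ∑ k, ∑ j, ∑ l, (X i ω * B i j * X j ω) * (X k ω * B k l * X l ω) := by
      funext ω; rw [sq, hQdef]
      rw [Finset.sum_mul_sum]
      exact Finset.sum_congr rfl fun i _ => Finset.sum_congr rfl fun k _ =>
        Finset.sum_mul_sum _ _ _ _
    have h1 : ∀ i k j l : Fin p,
        ∫ ω, (X i ω * B i j * X j ω) * (X k ω * B k l * X l ω) ∂μ
        = (B i j * B k l) *
          (1/9 * ((if i = j then (1:ℝ) else 0) * (if k = l then 1 else 0)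
             + (if i = k then 1 else 0) * (if j = l then 1 else 0)
             + (if i = l then 1 else 0) * (if j = k then 1 else 0))
           - 2/15 * ((if i = j then 1 else 0) * (if i = k then 1 else 0)
             * (if i = l then 1 else 0))) := by
      intro i k j l
      rw [show (fun ω => (X i ω * B i j * X j ω) * (X k ω * B k l * X l ω))
          = fun ω => (B i j * B k l) * (X i ω * X j ω * X k ω * X l ω) from
          funext fun ω => by ring,
        integral_const_mul, M hmeas hindep hunif i j k l]
    rw [h0, integral_finset_sum _ fun i _ => integrable_finset_sum _ fun k _ =>
      integrable_finset_sum _ fun j _ => integrable_finset_sum _ fun l _ => iterm4 i j k l]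
    have h2 : ∀ i : Fin p, ∫ ω, ∑ k, ∑ j, ∑ l,
        (X i ω * B i j * X j ω) * (X k ω * B k l * X l ω) ∂μ
        = ∑ k, ∑ j, ∑ l, ∫ ω, (X i ω * B i j * X j ω) * (X k ω * B k l * X l ω) ∂μ := by
      intro i
      rw [integral_finset_sum _ fun k _ => integrable_finset_sum _ fun j _ =>
        integrable_finset_sum _ fun l _ => iterm4 i j k l]
      refine Finset.sum_congr rfl fun k _ => ?_
      rw [integral_finset_sum _ fun j _ => integrable_finset_sum _ fun l _ => iterm4 i j k l]
      refine Finset.sum_congr rfl fun j _ => ?_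
      rw [integral_finset_sum _ fun l _ => iterm4 i j k l]
    simp only [h2, h1]
    exact deltasum p B
  -- assemble
  have hsplit : (fun ω => (a + Q ω + Lx ω)^2)
      = fun ω => (a^2 + (2*a) * Q ω + ((2*a) * Lx ω + (2 * (Q ω * Lx ω) + Q ω^2))) + Lx ω^2 :=
    funext fun ω => by ring
  have step : ∫ ω, (a + Q ω + Lx ω)^2 ∂μ
      = a^2 + (2*a) * ((∑ i, B i i)/3) + ((2*a) * 0 + (2 * 0 +
          (1/9 * (∑ i, B i i)^2 + 1/9 * (∑ i, ∑ j, (B i j)^2)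
            + 1/9 * (∑ i, ∑ j, B i j * B j i) - 2/15 * ∑ i, (B i i)^2)))
        + (1/3) * ∑ i, (L i)^2 := by
    rw [hsplit]
    have iA5 : Integrable (fun ω => a^2 + (2*a) * Q ω
        + ((2*a) * Lx ω + (2 * (Q ω * Lx ω) + Q ω^2))) μ := by
      exact ((integrable_const _).add (iQ.const_mul _)).add
        ((iLx.const_mul _).add ((iQLx.const_mul 2).add iQ2))
    have iA4 : Integrable (fun ω => a^2 + (2*a) * Q ω) μ := by
      exact (integrable_const _).add (iQ.const_mul _)
    have iA3 : Integrable (fun ω => (2*a) * Lx ω + (2 * (Q ω * Lx ω) + Q ω^2)) μ := by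
      exact (iLx.const_mul _).add ((iQLx.const_mul 2).add iQ2)
    have iA2 : Integrable (fun ω => 2 * (Q ω * Lx ω) + Q ω^2) μ := by
      exact (iQLx.const_mul 2).add iQ2
    have iC : Integrable (fun _ : Ω => a^2) μ := integrable_const _
    have iQc : Integrable (fun ω => (2*a) * Q ω) μ := iQ.const_mul _
    have iLxc : Integrable (fun ω => (2*a) * Lx ω) μ := iLx.const_mul _
    have iQLxc : Integrable (fun ω => 2 * (Q ω * Lx ω)) μ := iQLx.const_mul 2
    rw [integral_add iA5 iLx2, integral_add iA4 iA3, integral_add iC iQc,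
      integral_add iLxc iA2, integral_add iQLxc iQ2,
      integral_const, integral_const_mul, integral_const_mul, integral_const_mul]
    simp only [measure_univ, probReal_univ, ENNReal.toReal_one, smul_eq_mul, one_mul]
    rw [EQ, ELx, EQLx, EQ2, ELx2]
  calc ∫ ω, (a + Q ω + Lx ω)^2 ∂μ = _ := step
    _ = (a + (∑ i, B i i)/3)^2
        + (1/9 * (∑ i, ∑ j, (B i j)^2) + 1/9 * (∑ i, ∑ j, B i j * B j i)
            - 2/15 * ∑ i, (B i i)^2)
        + (1/3) * ∑ i, (L i)^2 := by ring

end Main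

end LRIQD

/-- Inconsistency of linear rules for the quadratic demand model: for `X`
uniform on `[−1,1]ᵖ`, `f_ρ(x) = A + xᵀBx + Cᵀx` with symmetric `B ≠ 0`, every
affine rule `g(x) = d + Eᵀx` satisfies
`E[(f_ρ(X)−g(X))²] ≥ (2/9)tr(B²) − (2/15)ΣBᵢᵢ² > 0`. -/
theorem linear_rule_inconsistency_QD
    {Ω : Type*} [MeasurableSpace Ω] (μ : Measure Ω) [IsProbabilityMeasure μ]
    (p : ℕ) (X : Fin p → Ω → ℝ)
    (hmeas : ∀ i, Measurable (X i))
    (hindep : iIndepFun X μ)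
    (hunif : ∀ i, Measure.map (X i) μ
        = (2 : ℝ≥0∞)⁻¹ • (volume.restrict (Set.Icc (-1 : ℝ) 1)))
    (A : ℝ) (C : Fin p → ℝ) (B : Matrix (Fin p) (Fin p) ℝ) (hB : B.IsSymm)
    (hBnz : B ≠ 0) :
    (∀ (d : ℝ) (E : Fin p → ℝ),
      2/9 * Matrix.trace (B * B) - 2/15 * ∑ i, (B i i)^2
        ≤ ∫ ω, (A + (∑ i, ∑ j, X i ω * B i j * X j ω) + (∑ i, C i * X i ω)
            - (d + ∑ i, E i * X i ω))^2 ∂μ) ∧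
    0 < 2/9 * Matrix.trace (B * B) - 2/15 * ∑ i, (B i i)^2 := by
  have hsym : ∀ i j, B j i = B i j := fun i j => hB.apply i j
  have htr : Matrix.trace (B * B) = ∑ i, ∑ j, B i j * B j i := by
    simp [Matrix.trace, Matrix.mul_apply, Matrix.diag]
  have hsq : ∑ i, ∑ j, B i j * B j i = ∑ i, ∑ j, (B i j)^2 :=
    Finset.sum_congr rfl fun i _ => Finset.sum_congr rfl fun j _ => by
      rw [hsym i j]; ring
  constructor
  · intro d E
    have hrw : (fun ω => (A + (∑ i, ∑ j, X i ω * B i j * X j ω) + (∑ i, C i * X i ω)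
            - (d + ∑ i, E i * X i ω))^2)
        = fun ω => ((A - d) + (∑ i, ∑ j, X i ω * B i j * X j ω)
            + ∑ i, (C i - E i) * X i ω)^2 := by
      funext ω
      have hs : ∑ i, (C i - E i) * X i ω
          = (∑ i, C i * X i ω) - ∑ i, E i * X i ω := by
        rw [← Finset.sum_sub_distrib]
        exact Finset.sum_congr rfl fun i _ => sub_mul _ _ _
      rw [hs]; ring
    have key := LRIQD.integral_sq_eq hmeas hindep hunif B (A - d) (fun i => C i - E i)
    rw [hrw, key, htr, hsq]
    have hL2 : 0 ≤ ∑ i, (C i - E i)^2 := Finset.sum_nonneg fun i _ => sq_nonneg _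
    nlinarith [sq_nonneg ((A - d) + (∑ i, B i i)/3)]
  · obtain ⟨i0, j0, hne⟩ : ∃ i j, B i j ≠ 0 := by
      by_contra h
      push_neg at h
      exact hBnz (by ext i j; exact h i j)
    have hpos : 0 < ∑ i, ∑ j, (B i j)^2 := by
      have h1 : (B i0 j0)^2 ≤ ∑ j, (B i0 j)^2 :=
        Finset.single_le_sum (f := fun j => (B i0 j)^2) (fun j _ => sq_nonneg _)
          (Finset.mem_univ j0)
      have h2 : ∑ j, (B i0 j)^2 ≤ ∑ i, ∑ j, (B i j)^2 :=
        Finset.single_le_sum (f := fun i => ∑ j, (B i j)^2)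
          (fun i _ => Finset.sum_nonneg fun j _ => sq_nonneg _)
          (Finset.mem_univ i0)
      have h3 : 0 < (B i0 j0)^2 := by positivity
      linarith
    have hdiag : ∑ i, (B i i)^2 ≤ ∑ i, ∑ j, (B i j)^2 :=
      Finset.sum_le_sum fun i _ =>
        Finset.single_le_sum (f := fun j => (B i j)^2) (fun j _ => sq_nonneg _)
          (Finset.mem_univ i)
    rw [htr, hsq]
    linarith
end
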